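/- arXiv:1411.4357 — 9 statements merged into one kernel-verified Lean document; each statement's English description precedes it below -/
import Mathlib

section
/- Let S be a sparse embedding (CountSketch) random matrix with r rows and d columns. Then for every x ∈ ℝ^d with ‖x‖₂ = 1, E[(‖Sx‖₂² − 1)²] ≤ 2/r. In particular, for 0 < ε, δ < 1, if r ≥ 2/(ε²δ), then S satisfies the (ε, δ, 2)-JL moment property, i.e., E[(‖Sx‖₂² − 1)²] ≤ ε²·δ for every unit vector x ∈ ℝ^d. -/
open MeasureTheory Matrix

/-- The Euclidean norm of a vector in `ℝ^n`. -/
noncomputable def euclNorm {n : ℕ} (x : Fin n → ℝ) : ℝ := Real.sqrt (∑ i, (x i) ^ 2)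

/-- The probability space underlying a CountSketch (sparse embedding) matrix with `r`
rows and `d` columns: `2d` mutually independent uniform random variables, `d` of them
uniform on `{1,…,r}` (the hash values) and `d` of them uniform on `{−1,+1}` (the signs,
encoded as booleans), modeled by the uniform measure on the finite product space. -/
noncomputable def countSketchMeasure (r d : ℕ) (hr : r ≠ 0) :
    Measure ((Fin d → Fin r) × (Fin d → Bool)) :=
  haveI : NeZero r := ⟨hr⟩
  (PMF.uniformOfFintype ((Fin d → Fin r) × (Fin d → Bool))).toMeasure

/-- The sign `σ(j) ∈ {−1, +1}` encoded by a boolean. -/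
def countSketchSign (b : Bool) : ℝ := if b then 1 else -1

/-- The CountSketch (sparse embedding) matrix determined by hash values `ω.1` and
signs `ω.2`: the `(i,j)` entry is `σ(j)` if `h(j) = i` and `0` otherwise. -/
noncomputable def countSketch {r d : ℕ} (ω : (Fin d → Fin r) × (Fin d → Bool)) :
    Matrix (Fin r) (Fin d) ℝ :=
  Matrix.of fun i j => if ω.1 j = i then countSketchSign (ω.2 j) else 0

/- ### Auxiliary definitions and lemmas -/

lemma csign_mul_self (b : Bool) : countSketchSign b * countSketchSign b = 1 := by
  cases b <;> norm_num [countSketchSign]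

lemma csign_sq (b : Bool) : countSketchSign b ^ 2 = 1 := by
  cases b <;> norm_num [countSketchSign]

lemma csign_not (b : Bool) : countSketchSign (!b) = - countSketchSign b := by
  cases b <;> norm_num [countSketchSign]

/-- The `h`-dependent coefficient. -/
def csC {r d : ℕ} (x : Fin d → ℝ) (p : Fin d × Fin d) (h : Fin d → Fin r) : ℝ :=
  if h p.1 = h p.2 then x p.1 * x p.2 else 0

/-- The `σ`-dependent sign factor. -/
def csT {d : ℕ} (p : Fin d × Fin d) (σ : Fin d → Bool) : ℝ :=
  countSketchSign (σ p.1) * countSketchSign (σ p.2)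

lemma sigma_base {d : ℕ} (a b c e : Fin d) (hb : a ≠ b) (hc : a ≠ c) (he : a ≠ e) :
    ∑ σ : Fin d → Bool, countSketchSign (σ a) * countSketchSign (σ b) *
      (countSketchSign (σ c) * countSketchSign (σ e)) = 0 := by
  set f : (Fin d → Bool) → ℝ := fun σ => countSketchSign (σ a) * countSketchSign (σ b) *
      (countSketchSign (σ c) * countSketchSign (σ e)) with hf
  set g : (Fin d → Bool) → (Fin d → Bool) := fun σ => Function.update σ a (!σ a) with hg
  have hbij : Function.Bijective g := by
    have hinv : Function.Involutive g := by
      intro σ; funext j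
      by_cases hj : j = a
      · subst hj; simp [hg]
      · simp [hg, Function.update_of_ne hj]
    exact hinv.bijective
  have hkey : ∀ σ, f (g σ) = - f σ := by
    intro σ
    have h1 : g σ a = !σ a := by simp [hg]
    have h2 : g σ b = σ b := by simp [hg, Function.update_of_ne (Ne.symm hb)]
    have h3 : g σ c = σ c := by simp [hg, Function.update_of_ne (Ne.symm hc)]
    have h4 : g σ e = σ e := by simp [hg, Function.update_of_ne (Ne.symm he)]
    rw [hf]
    simp only [h1, h2, h3, h4, csign_not]
    ring
  have h5 : ∑ σ, f (g σ) = ∑ σ, f σ := Function.Bijective.sum_comp hbij f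
  have h6 : ∑ σ, f (g σ) = - ∑ σ, f σ := by
    rw [← Finset.sum_neg_distrib]
    exact Finset.sum_congr rfl fun σ _ => hkey σ
  linarith [h5, h6]

lemma sigma_zero {d : ℕ} (a b c e : Fin d) (hab : a ≠ b) (hce : c ≠ e)
    (h1 : ¬(c = a ∧ e = b)) (h2 : ¬(c = b ∧ e = a)) :
    ∑ σ : Fin d → Bool, countSketchSign (σ a) * countSketchSign (σ b) *
      (countSketchSign (σ c) * countSketchSign (σ e)) = 0 := by
  by_cases hac : a = c
  · subst hac
    have hbe : b ≠ e := fun hbe => h1 ⟨rfl, hbe.symm⟩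
    have := sigma_base b a a e (Ne.symm hab) (Ne.symm hab) hbe
    rw [← this]
    exact Finset.sum_congr rfl fun σ _ => by ring
  · by_cases hae : a = e
    · subst hae
      have hbc : b ≠ c := fun hbc => h2 ⟨hbc.symm, rfl⟩
      have := sigma_base b a c a (Ne.symm hab) hbc (Ne.symm hab)
      rw [← this]
      exact Finset.sum_congr rfl fun σ _ => by ring
    · exact sigma_base a b c e hab hac hae

lemma sigma_match {d : ℕ} (a b : Fin d) :
    ∑ σ : Fin d → Bool, countSketchSign (σ a) * countSketchSign (σ b) *
      (countSketchSign (σ a) * countSketchSign (σ b)) = 2 ^ d := by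
  have h1 : ∀ σ : Fin d → Bool, countSketchSign (σ a) * countSketchSign (σ b) *
      (countSketchSign (σ a) * countSketchSign (σ b)) = 1 := by
    intro σ
    have h1 := csign_mul_self (σ a); have h2 := csign_mul_self (σ b); nlinarith
  simp only [h1]
  simp [Finset.card_univ]

lemma count_le {r d : ℕ} (p : Fin d × Fin d) (hp : p.1 ≠ p.2) :
    (Finset.univ.filter fun h : Fin d → Fin r => h p.1 = h p.2).card * r ≤ r ^ d := by
  classical
  have hd : 1 ≤ d := (p.1).pos
  have hcard : (Finset.univ.filter fun h : Fin d → Fin r => h p.1 = h p.2).card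
      = Fintype.card {h : Fin d → Fin r // h p.1 = h p.2} := (Fintype.card_subtype _).symm
  have hinj : Function.Injective
      (fun (h : {h : Fin d → Fin r // h p.1 = h p.2}) (j : {j : Fin d // j ≠ p.2}) => h.1 j.1) := by
    intro h h' hh
    apply Subtype.ext; funext j
    by_cases hj : j = p.2
    · subst hj
      have hq := congrFun hh ⟨p.1, hp⟩
      simp only at hq
      rw [← h.2, ← h'.2] at *
      exact hq
    · exact congrFun hh ⟨j, hj⟩
  have hle := Fintype.card_le_of_injective _ hinj
  have hc2 : Fintype.card ({j : Fin d // j ≠ p.2} → Fin r) = r ^ (d - 1) := by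
    rw [Fintype.card_fun, Fintype.card_fin]
    congr 1
    have h := Fintype.card_subtype_compl (fun j : Fin d => j = p.2)
    rw [Fintype.card_subtype_eq, Fintype.card_fin] at h
    exact h
  have hN : (Finset.univ.filter fun h : Fin d → Fin r => h p.1 = h p.2).card ≤ r ^ (d - 1) := by
    rw [hcard]; rw [hc2] at hle; exact hle
  have hpow : r ^ (d - 1) * r = r ^ d := by
    rw [← pow_succ, Nat.sub_add_cancel hd]
  calc (Finset.univ.filter fun h : Fin d → Fin r => h p.1 = h p.2).card * r
      ≤ r ^ (d - 1) * r := Nat.mul_le_mul_right r hN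
    _ = r ^ d := hpow

lemma Z_eq {r d : ℕ} (x : Fin d → ℝ) (hx : ∑ j, x j ^ 2 = 1)
    (h : Fin d → Fin r) (σ : Fin d → Bool) :
    euclNorm ((countSketch (h, σ)).mulVec x) ^ 2 - 1
      = ∑ p ∈ Finset.univ.offDiag, csC x p h * csT p σ := by
  have hnorm : euclNorm ((countSketch (h, σ)).mulVec x) ^ 2
      = ∑ i, ((countSketch (h, σ)).mulVec x i) ^ 2 := by
    rw [euclNorm]; exact Real.sq_sqrt (by positivity)
  have hmv : ∀ i, (countSketch (h, σ)).mulVec x i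
      = ∑ j, (if h j = i then countSketchSign (σ j) * x j else 0) := by
    intro i
    simp [Matrix.mulVec, dotProduct, countSketch, ite_mul]
  have expand : ∑ i, ((countSketch (h, σ)).mulVec x i) ^ 2
      = ∑ p : Fin d × Fin d, csC x p h * csT p σ := by
    simp_rw [hmv, sq, Finset.sum_mul_sum]
    rw [Finset.sum_comm]
    rw [Fintype.sum_prod_type]
    apply Finset.sum_congr rfl
    intro j _
    rw [Finset.sum_comm]
    apply Finset.sum_congr rfl
    intro k _
    have hcomb : ∀ i : Fin r, (if h j = i then countSketchSign (σ j) * x j else 0) *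
        (if h k = i then countSketchSign (σ k) * x k else 0)
        = if h j = i then ((if h k = i then (countSketchSign (σ j) * x j) *
            (countSketchSign (σ k) * x k) else 0)) else 0 := by
      intro i
      by_cases h1 : h j = i <;> by_cases h2 : h k = i <;> simp [h1, h2]
    simp_rw [hcomb]
    rw [Finset.sum_ite_eq]
    simp only [Finset.mem_univ, if_true]
    unfold csC csT
    by_cases hc : h j = h k
    · rw [if_pos hc.symm, if_pos hc]; ring
    · rw [if_neg (fun hh => hc hh.symm), if_neg hc, zero_mul]
  rw [hnorm, expand]
  rw [← Finset.univ_product_univ, ← Finset.diag_union_offDiag (Finset.univ : Finset (Fin d)),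
     Finset.sum_union (Finset.disjoint_diag_offDiag _), Finset.sum_diag]
  have hdiag : ∑ j, csC x (j, j) h * csT (j, j) σ = 1 := by
    unfold csC csT
    simp [csign_sq, ← sq]
    exact hx
  rw [hdiag]
  ring

lemma Chh_pp {r d : ℕ} (x : Fin d → ℝ) (p : Fin d × Fin d) :
    ∑ h : Fin d → Fin r, csC x p h * csC x p h
      = ((Finset.univ.filter fun h : Fin d → Fin r => h p.1 = h p.2).card : ℝ)
          * (x p.1 * x p.2) ^ 2 := by
  have h1 : ∀ h : Fin d → Fin r, csC x p h * csC x p h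
      = if h p.1 = h p.2 then (x p.1 * x p.2) ^ 2 else 0 := by
    intro h
    unfold csC
    by_cases hc : h p.1 = h p.2
    · rw [if_pos hc, if_pos hc, sq]
    · rw [if_neg hc, if_neg hc, mul_zero]
  simp_rw [h1]
  rw [Finset.sum_ite, Finset.sum_const, Finset.sum_const_zero, add_zero, nsmul_eq_mul]

lemma Chh_ps {r d : ℕ} (x : Fin d → ℝ) (p : Fin d × Fin d) :
    ∑ h : Fin d → Fin r, csC x p h * csC x p.swap h
      = ((Finset.univ.filter fun h : Fin d → Fin r => h p.1 = h p.2).card : ℝ)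
          * (x p.1 * x p.2) ^ 2 := by
  have h1 : ∀ h : Fin d → Fin r, csC x p h * csC x p.swap h
      = if h p.1 = h p.2 then (x p.1 * x p.2) ^ 2 else 0 := by
    intro h
    unfold csC
    simp only [Prod.fst_swap, Prod.snd_swap]
    by_cases hc : h p.1 = h p.2
    · rw [if_pos hc, if_pos hc.symm, if_pos hc]; ring
    · rw [if_neg hc, if_neg (fun hh => hc hh.symm), mul_zero, if_neg hc]
  simp_rw [h1]
  rw [Finset.sum_ite, Finset.sum_const, Finset.sum_const_zero, add_zero, nsmul_eq_mul]

lemma Tss_pp {d : ℕ} (p : Fin d × Fin d) :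
    ∑ σ : Fin d → Bool, csT p σ * csT p σ = 2 ^ d := by
  unfold csT
  exact sigma_match p.1 p.2

lemma Tss_ps {d : ℕ} (p : Fin d × Fin d) :
    ∑ σ : Fin d → Bool, csT p σ * csT p.swap σ = 2 ^ d := by
  unfold csT
  simp only [Prod.fst_swap, Prod.snd_swap]
  rw [← sigma_match p.1 p.2]
  exact Finset.sum_congr rfl fun σ _ => by ring

lemma int_eq (r d : ℕ) (hr : r ≠ 0) (F : (Fin d → Fin r) × (Fin d → Bool) → ℝ) :
    ∫ ω, F ω ∂(countSketchMeasure r d hr)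
      = ((r : ℝ) ^ d * 2 ^ d)⁻¹ * ∑ ω, F ω := by
  haveI : NeZero r := ⟨hr⟩
  haveI : IsProbabilityMeasure (countSketchMeasure r d hr) := by
    unfold countSketchMeasure; infer_instance
  have hμ : ∀ ω : (Fin d → Fin r) × (Fin d → Bool),
      ((countSketchMeasure r d hr) {ω}).toReal = ((r : ℝ) ^ d * 2 ^ d)⁻¹ := by
    intro ω
    rw [countSketchMeasure, PMF.toMeasure_apply_singleton _ _ (measurableSet_singleton ω),
      PMF.uniformOfFintype_apply]
    rw [ENNReal.toReal_inv, ENNReal.toReal_natCast]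
    congr 1
    simp only [Fintype.card_prod, Fintype.card_fun, Fintype.card_fin, Fintype.card_bool]
    push_cast
    ring
  rw [integral_fintype (Integrable.of_finite)]
  simp_rw [Measure.real, hμ, smul_eq_mul, ← Finset.mul_sum]

/-- Second-moment bound for CountSketch. -/
lemma second_moment (r d : ℕ) (hr : r ≠ 0) (x : Fin d → ℝ) (hx : euclNorm x = 1) :
    ∫ ω, (euclNorm ((countSketch ω).mulVec x) ^ 2 - 1) ^ 2 ∂(countSketchMeasure r d hr)
      ≤ 2 / (r : ℝ) := by
  classical
  have hx2 : ∑ j, x j ^ 2 = 1 := by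
    rw [euclNorm] at hx
    exact Real.sqrt_eq_one.mp hx
  have hr0 : (0 : ℝ) < r := by
    have := Nat.pos_of_ne_zero hr; exact_mod_cast this
  have hrd0 : (0 : ℝ) < (r : ℝ) ^ d := by positivity
  set off : Finset (Fin d × Fin d) := (Finset.univ : Finset (Fin d)).offDiag with hoff
  -- the ω-sum
  have hsum1 : ∑ ω : (Fin d → Fin r) × (Fin d → Bool),
        (euclNorm ((countSketch ω).mulVec x) ^ 2 - 1) ^ 2
      = ∑ p ∈ off, ∑ q ∈ off,
          (∑ h : Fin d → Fin r, csC x p h * csC x q h) *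
            (∑ σ : Fin d → Bool, csT p σ * csT q σ) := by
    rw [Fintype.sum_prod_type]
    calc ∑ h : Fin d → Fin r, ∑ σ : Fin d → Bool,
          (euclNorm ((countSketch (h, σ)).mulVec x) ^ 2 - 1) ^ 2
        = ∑ h : Fin d → Fin r, ∑ σ : Fin d → Bool, ∑ p ∈ off, ∑ q ∈ off,
            (csC x p h * csC x q h) * (csT p σ * csT q σ) := by
          refine Finset.sum_congr rfl fun h _ => Finset.sum_congr rfl fun σ _ => ?_
          rw [Z_eq x hx2 h σ, sq, Finset.sum_mul_sum]
          exact Finset.sum_congr rfl fun p _ => Finset.sum_congr rfl fun q _ => by ring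
      _ = ∑ h : Fin d → Fin r, ∑ p ∈ off, ∑ σ : Fin d → Bool, ∑ q ∈ off,
            (csC x p h * csC x q h) * (csT p σ * csT q σ) :=
          Finset.sum_congr rfl fun h _ => Finset.sum_comm
      _ = ∑ h : Fin d → Fin r, ∑ p ∈ off, ∑ q ∈ off, ∑ σ : Fin d → Bool,
            (csC x p h * csC x q h) * (csT p σ * csT q σ) :=
          Finset.sum_congr rfl fun h _ => Finset.sum_congr rfl fun p _ => Finset.sum_comm
      _ = ∑ p ∈ off, ∑ h : Fin d → Fin r, ∑ q ∈ off, ∑ σ : Fin d → Bool,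
            (csC x p h * csC x q h) * (csT p σ * csT q σ) := Finset.sum_comm
      _ = ∑ p ∈ off, ∑ q ∈ off, ∑ h : Fin d → Fin r, ∑ σ : Fin d → Bool,
            (csC x p h * csC x q h) * (csT p σ * csT q σ) :=
          Finset.sum_congr rfl fun p _ => Finset.sum_comm
      _ = ∑ p ∈ off, ∑ q ∈ off,
            (∑ h : Fin d → Fin r, csC x p h * csC x q h) *
              (∑ σ : Fin d → Bool, csT p σ * csT q σ) := by
          refine Finset.sum_congr rfl fun p _ => Finset.sum_congr rfl fun q _ => ?_
          rw [Finset.sum_mul_sum]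
  -- reduce the q-sum to q ∈ {p, p.swap}
  have hpair : ∀ p ∈ off, ∑ q ∈ off,
        (∑ h : Fin d → Fin r, csC x p h * csC x q h) *
          (∑ σ : Fin d → Bool, csT p σ * csT q σ)
      = 2 * (((Finset.univ.filter fun h : Fin d → Fin r => h p.1 = h p.2).card : ℝ)
          * (x p.1 * x p.2) ^ 2 * 2 ^ d) := by
    intro p hp
    have hp12 : p.1 ≠ p.2 := by
      rw [hoff] at hp; exact (Finset.mem_offDiag.mp hp).2.2
    have hpswap : p ≠ p.swap := by
      intro hps
      apply hp12
      have := congrArg Prod.snd hps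
      simpa using this.symm
    have hsub : ({p, p.swap} : Finset (Fin d × Fin d)) ⊆ off := by
      intro q hq
      rcases Finset.mem_insert.mp hq with hq | hq
      · subst hq; exact hp
      · rw [Finset.mem_singleton] at hq
        subst hq
        rw [hoff]
        simp [Finset.mem_offDiag, Ne.symm hp12]
    have hzero : ∀ q ∈ off, q ∉ ({p, p.swap} : Finset (Fin d × Fin d)) →
        (∑ h : Fin d → Fin r, csC x p h * csC x q h) *
          (∑ σ : Fin d → Bool, csT p σ * csT q σ) = 0 := by
      intro q hq hqn
      have hq12 : q.1 ≠ q.2 := by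
        rw [hoff] at hq; exact (Finset.mem_offDiag.mp hq).2.2
      simp only [Finset.mem_insert, Finset.mem_singleton, not_or] at hqn
      have h1 : ¬(q.1 = p.1 ∧ q.2 = p.2) := by
        intro hc; exact hqn.1 (Prod.ext hc.1 hc.2)
      have h2 : ¬(q.1 = p.2 ∧ q.2 = p.1) := by
        intro hc
        apply hqn.2
        apply Prod.ext <;> simp [hc.1, hc.2]
      have hz : ∑ σ : Fin d → Bool, csT p σ * csT q σ = 0 := by
        unfold csT
        exact sigma_zero p.1 p.2 q.1 q.2 hp12 hq12 h1 h2
      rw [hz, mul_zero]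
    rw [← Finset.sum_subset hsub hzero, Finset.sum_pair hpswap]
    rw [Chh_pp, Chh_ps, Tss_pp, Tss_ps]
    ring
  -- the integral, rewritten
  rw [int_eq]
  rw [hsum1, Finset.sum_congr rfl hpair]
  -- now bound the explicit sum
  set t : ℝ := ∑ p ∈ off,
    ((Finset.univ.filter fun h : Fin d → Fin r => h p.1 = h p.2).card : ℝ)
      * (x p.1 * x p.2) ^ 2 with ht
  have hsum2 : ∑ p ∈ off,
      2 * (((Finset.univ.filter fun h : Fin d → Fin r => h p.1 = h p.2).card : ℝ)
          * (x p.1 * x p.2) ^ 2 * 2 ^ d)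
      = 2 * 2 ^ d * t := by
    rw [ht, Finset.mul_sum]
    exact Finset.sum_congr rfl fun p _ => by ring
  rw [hsum2]
  -- t * r ≤ r ^ d
  have hXsum : ∑ p ∈ off, (x p.1 * x p.2) ^ 2 ≤ 1 := by
    have hsub : off ⊆ (Finset.univ ×ˢ Finset.univ : Finset (Fin d × Fin d)) := by
      intro q _; simp [Finset.mem_product]
    have h1 : ∑ p ∈ off, (x p.1 * x p.2) ^ 2
        ≤ ∑ p ∈ (Finset.univ ×ˢ Finset.univ : Finset (Fin d × Fin d)), (x p.1 * x p.2) ^ 2 :=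
      Finset.sum_le_sum_of_subset_of_nonneg hsub (fun q _ _ => by positivity)
    have h2 : ∑ p ∈ (Finset.univ ×ˢ Finset.univ : Finset (Fin d × Fin d)),
        (x p.1 * x p.2) ^ 2 = 1 := by
      rw [Finset.sum_product]
      calc ∑ j, ∑ k, (x j * x k) ^ 2 = ∑ j, ∑ k, x j ^ 2 * x k ^ 2 := by
            exact Finset.sum_congr rfl fun j _ => Finset.sum_congr rfl fun k _ => by ring
        _ = (∑ j, x j ^ 2) * (∑ k, x k ^ 2) := (Finset.sum_mul_sum _ _ _ _).symm
        _ = 1 := by rw [hx2]; norm_num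
    linarith
  have htr : t * r ≤ (r : ℝ) ^ d := by
    have hterm : ∀ p ∈ off,
        ((Finset.univ.filter fun h : Fin d → Fin r => h p.1 = h p.2).card : ℝ)
          * (x p.1 * x p.2) ^ 2 * r ≤ (r : ℝ) ^ d * (x p.1 * x p.2) ^ 2 := by
      intro p hp
      have hp12 : p.1 ≠ p.2 := by
        rw [hoff] at hp; exact (Finset.mem_offDiag.mp hp).2.2
      have hc := count_le (r := r) p hp12
      have hc' : ((Finset.univ.filter fun h : Fin d → Fin r => h p.1 = h p.2).card : ℝ) * r
          ≤ (r : ℝ) ^ d := by exact_mod_cast hc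
      have hXnn : (0 : ℝ) ≤ (x p.1 * x p.2) ^ 2 := by positivity
      calc ((Finset.univ.filter fun h : Fin d → Fin r => h p.1 = h p.2).card : ℝ)
            * (x p.1 * x p.2) ^ 2 * r
          = (((Finset.univ.filter fun h : Fin d → Fin r => h p.1 = h p.2).card : ℝ) * r)
              * (x p.1 * x p.2) ^ 2 := by ring
        _ ≤ (r : ℝ) ^ d * (x p.1 * x p.2) ^ 2 := by
            exact mul_le_mul_of_nonneg_right hc' hXnn
    calc t * r = ∑ p ∈ off,
          ((Finset.univ.filter fun h : Fin d → Fin r => h p.1 = h p.2).card : ℝ)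
            * (x p.1 * x p.2) ^ 2 * r := by rw [ht, Finset.sum_mul]
      _ ≤ ∑ p ∈ off, (r : ℝ) ^ d * (x p.1 * x p.2) ^ 2 := Finset.sum_le_sum hterm
      _ = (r : ℝ) ^ d * ∑ p ∈ off, (x p.1 * x p.2) ^ 2 := by rw [Finset.mul_sum]
      _ ≤ (r : ℝ) ^ d * 1 := by
          exact mul_le_mul_of_nonneg_left hXsum (le_of_lt hrd0)
      _ = (r : ℝ) ^ d := by ring
  -- final arithmetic
  have h2d0 : (0 : ℝ) < 2 ^ d := by positivity
  have heq : ((r : ℝ) ^ d * 2 ^ d)⁻¹ * (2 * 2 ^ d * t) = 2 * t / (r : ℝ) ^ d := by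
    field_simp
  rw [heq, div_le_div_iff₀ hrd0 hr0]
  nlinarith [htr]

/-- second moment bound for CountSketch, and the consequent
(ε, δ, 2)-JL moment property when `r ≥ 2/(ε²δ)`. -/
theorem stmt1 (r d : ℕ) (hr : r ≠ 0) :
    (∀ x : Fin d → ℝ, euclNorm x = 1 →
      ∫ ω, (euclNorm ((countSketch ω).mulVec x) ^ 2 - 1) ^ 2 ∂(countSketchMeasure r d hr)
        ≤ 2 / (r : ℝ)) ∧
    (∀ ε δ : ℝ, 0 < ε → ε < 1 → 0 < δ → δ < 1 → (r : ℝ) ≥ 2 / (ε ^ 2 * δ) →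
      ∀ x : Fin d → ℝ, euclNorm x = 1 →
        ∫ ω, (euclNorm ((countSketch ω).mulVec x) ^ 2 - 1) ^ 2 ∂(countSketchMeasure r d hr)
          ≤ ε ^ 2 * δ) := by
  refine ⟨fun x hx => second_moment r d hr x hx, ?_⟩
  intro ε δ hε hε1 hδ hδ1 hrε x hx
  have h2 := second_moment r d hr x hx
  have hr0 : (0 : ℝ) < r := by
    have := Nat.pos_of_ne_zero hr; exact_mod_cast this
  have hεδ : (0 : ℝ) < ε ^ 2 * δ := by positivity
  have hkey : 2 / (r : ℝ) ≤ ε ^ 2 * δ := by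
    rw [div_le_iff₀ hr0]
    rw [ge_iff_le, div_le_iff₀ hεδ] at hrε
    nlinarith
  linarith
end

section
/- Let A be a real n×d matrix, let 𝒮 = {y ∈ ℝⁿ : y = Ax for some x ∈ ℝ^d and ‖y‖₂ = 1}, and let N ⊆ 𝒮 be a (1/2)-net for 𝒮, i.e., for every y ∈ 𝒮 there exists w ∈ N with ‖y − w‖₂ ≤ 1/2. Let S be a real k×n matrix and ε > 0 such that |⟨Sw, Sw′⟩ − ⟨w, w′⟩| ≤ ε for all w, w′ ∈ N. Then for every y ∈ 𝒮 it holds that |‖Sy‖₂² − 1| ≤ 4ε. -/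
open Matrix

/-- The standard inner product on `ℝ^n`. -/
def dotp {n : ℕ} (x y : Fin n → ℝ) : ℝ := ∑ i, x i * y i

lemma euclNorm_nonneg {n : ℕ} (x : Fin n → ℝ) : 0 ≤ euclNorm x := Real.sqrt_nonneg _

lemma euclNorm_sq {n : ℕ} (x : Fin n → ℝ) : euclNorm x ^ 2 = ∑ i, (x i) ^ 2 :=
  Real.sq_sqrt (by positivity)

lemma dotp_self {n : ℕ} (x : Fin n → ℝ) : dotp x x = euclNorm x ^ 2 := by
  rw [euclNorm_sq]; simp [dotp, sq]

lemma dotp_comm {n : ℕ} (x y : Fin n → ℝ) : dotp x y = dotp y x := by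
  simp [dotp, mul_comm]

lemma dotp_add_right {n : ℕ} (x y z : Fin n → ℝ) :
    dotp x (y + z) = dotp x y + dotp x z := by
  simp [dotp, mul_add, Finset.sum_add_distrib]

lemma dotp_add_left {n : ℕ} (x y z : Fin n → ℝ) :
    dotp (x + y) z = dotp x z + dotp y z := by
  simp [dotp, add_mul, Finset.sum_add_distrib]

lemma dotp_smul_right {n : ℕ} (c : ℝ) (x y : Fin n → ℝ) :
    dotp x (c • y) = c * dotp x y := by
  simp only [dotp, Pi.smul_apply, smul_eq_mul, Finset.mul_sum]
  exact Finset.sum_congr rfl fun i _ => by ring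

lemma dotp_smul_left {n : ℕ} (c : ℝ) (x y : Fin n → ℝ) :
    dotp (c • x) y = c * dotp x y := by
  rw [dotp_comm, dotp_smul_right, dotp_comm]

lemma euclNorm_smul {n : ℕ} (c : ℝ) (x : Fin n → ℝ) :
    euclNorm (c • x) = |c| * euclNorm x := by
  simp only [euclNorm, Pi.smul_apply, smul_eq_mul, mul_pow]
  rw [← Finset.mul_sum, Real.sqrt_mul (sq_nonneg c), Real.sqrt_sq_eq_abs]

lemma euclNorm_pos {n : ℕ} {x : Fin n → ℝ} (hx : x ≠ 0) : 0 < euclNorm x := by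
  rcases (euclNorm_nonneg x).lt_or_eq with h | h
  · exact h
  · exfalso; apply hx
    have h2 : euclNorm x ^ 2 = 0 := by rw [← h]; ring
    rw [euclNorm_sq] at h2
    have := (Finset.sum_eq_zero_iff_of_nonneg (fun i _ => sq_nonneg (x i))).1 h2
    funext i
    simpa [pow_eq_zero_iff] using this i (Finset.mem_univ i)

lemma abs_dotp_le {n : ℕ} (x y : Fin n → ℝ) : |dotp x y| ≤ euclNorm x * euclNorm y := by
  have h := Finset.sum_mul_sq_le_sq_mul_sq Finset.univ x y
  rw [← Real.sqrt_sq_eq_abs]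
  calc Real.sqrt (dotp x y ^ 2) ≤ Real.sqrt ((∑ i, x i ^ 2) * ∑ i, y i ^ 2) :=
        Real.sqrt_le_sqrt h
    _ = euclNorm x * euclNorm y := by
        rw [Real.sqrt_mul (by positivity)]; rfl

lemma mulVec_euclNorm_le {n k : ℕ} (S : Matrix (Fin k) (Fin n) ℝ) (z : Fin n → ℝ) :
    euclNorm (S.mulVec z) ≤ Real.sqrt (∑ i, ∑ j, S i j ^ 2) * euclNorm z := by
  have h : euclNorm (S.mulVec z) ^ 2 ≤ (∑ i, ∑ j, S i j ^ 2) * euclNorm z ^ 2 := by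
    rw [euclNorm_sq, euclNorm_sq, Finset.sum_mul]
    apply Finset.sum_le_sum; intro i _
    have := Finset.sum_mul_sq_le_sq_mul_sq Finset.univ (fun j => S i j) z
    simpa [Matrix.mulVec, dotProduct] using this
  have h2 := Real.sqrt_le_sqrt h
  rw [Real.sqrt_sq (euclNorm_nonneg _)] at h2
  calc euclNorm (S.mulVec z)
      ≤ Real.sqrt ((∑ i, ∑ j, S i j ^ 2) * euclNorm z ^ 2) := h2
    _ = _ := by
        rw [Real.sqrt_mul (by positivity), Real.sqrt_sq (euclNorm_nonneg _)]

/-- The quadratic-form error of `S` on the pair `(a, b)`. -/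
noncomputable def Qf {n k : ℕ} (S : Matrix (Fin k) (Fin n) ℝ) (a b : Fin n → ℝ) : ℝ :=
  dotp (S.mulVec a) (S.mulVec b) - dotp a b

lemma Qf_comm {n k : ℕ} (S : Matrix (Fin k) (Fin n) ℝ) (a b : Fin n → ℝ) :
    Qf S a b = Qf S b a := by
  simp [Qf, dotp_comm (S.mulVec a), dotp_comm a]

lemma Qf_add_right {n k : ℕ} (S : Matrix (Fin k) (Fin n) ℝ) (a b c : Fin n → ℝ) :
    Qf S a (b + c) = Qf S a b + Qf S a c := by
  simp [Qf, Matrix.mulVec_add, dotp_add_right]; ring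

lemma Qf_smul_right {n k : ℕ} (S : Matrix (Fin k) (Fin n) ℝ) (c : ℝ) (a b : Fin n → ℝ) :
    Qf S a (c • b) = c * Qf S a b := by
  simp [Qf, Matrix.mulVec_smul, dotp_smul_right]; ring

lemma Qf_expand {n k : ℕ} (S : Matrix (Fin k) (Fin n) ℝ) (w z' : Fin n → ℝ) (α : ℝ) :
    Qf S (w + α • z') (w + α • z')
      = Qf S w w + 2 * α * Qf S w z' + α ^ 2 * Qf S z' z' := by
  simp only [Qf, Matrix.mulVec_add, Matrix.mulVec_smul, dotp_add_right, dotp_add_left,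
    dotp_smul_right, dotp_smul_left]
  rw [dotp_comm z' w, dotp_comm (S.mulVec z') (S.mulVec w)]
  ring

/-- if `S` approximately preserves inner products on a `(1/2)`-net `N` of
the set `𝒮` of unit vectors of the column space of `A`, then `S` approximately
preserves the squared norm of every vector of `𝒮`. -/
theorem stmt6 {n d k : ℕ} (A : Matrix (Fin n) (Fin d) ℝ)
    (N : Set (Fin n → ℝ))
    (hN : ∀ w ∈ N, (∃ x : Fin d → ℝ, A.mulVec x = w) ∧ euclNorm w = 1)
    (hnet : ∀ y : Fin n → ℝ, (∃ x : Fin d → ℝ, A.mulVec x = y) → euclNorm y = 1 →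
      ∃ w ∈ N, euclNorm (y - w) ≤ 1 / 2)
    (S : Matrix (Fin k) (Fin n) ℝ) (ε : ℝ) (hε : 0 < ε)
    (hS : ∀ w ∈ N, ∀ w' ∈ N, |dotp (S.mulVec w) (S.mulVec w') - dotp w w'| ≤ ε)
    (y : Fin n → ℝ) (hy : ∃ x : Fin d → ℝ, A.mulVec x = y) (hy1 : euclNorm y = 1) :
    |euclNorm (S.mulVec y) ^ 2 - 1| ≤ 4 * ε := by
  classical
  set C : ℝ := Real.sqrt (∑ i, ∑ j, S i j ^ 2) with hCdef
  have hC0 : 0 ≤ C := Real.sqrt_nonneg _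
  have hCb : ∀ z, euclNorm (S.mulVec z) ≤ C * euclNorm z := fun z => mulVec_euclNorm_le S z
  have tri : ∀ x y : ℝ, |x - y| ≤ |x| + |y| := fun x y => by
    rw [sub_eq_add_neg]; simpa using abs_add_le x (-y)
  -- uniform bound on |Qf| over unit vectors
  have hQb : ∀ a b : Fin n → ℝ, euclNorm a = 1 → euclNorm b = 1 →
      |Qf S a b| ≤ C * C + 1 := by
    intro a b ha hb
    have ha' := hCb a; have hb' := hCb b
    rw [ha, mul_one] at ha'; rw [hb, mul_one] at hb'
    have h1 : |dotp (S.mulVec a) (S.mulVec b)| ≤ C * C :=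
      (abs_dotp_le _ _).trans (mul_le_mul ha' hb' (euclNorm_nonneg _) hC0)
    have h2 : |dotp a b| ≤ 1 := by
      have := abs_dotp_le a b; rw [ha, hb] at this; simpa using this
    exact (tri _ _).trans (add_le_add h1 h2)
  -- decomposition of any unit vector of the column space via the net
  have decomp : ∀ z : Fin n → ℝ, (∃ x, A.mulVec x = z) → euclNorm z = 1 →
      ∃ w ∈ N, ∃ α : ℝ, 0 ≤ α ∧ α ≤ 1 / 2 ∧
        ∃ z', (∃ x, A.mulVec x = z') ∧ euclNorm z' = 1 ∧ z = w + α • z' := by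
    intro z hzc hz1
    obtain ⟨w, hwN, hle⟩ := hnet z hzc hz1
    by_cases hu : z - w = 0
    · exact ⟨w, hwN, 0, le_refl 0, by norm_num, z, hzc, hz1, by
        rw [zero_smul, add_zero]; exact sub_eq_zero.1 hu⟩
    · have hα : 0 < euclNorm (z - w) := euclNorm_pos hu
      refine ⟨w, hwN, euclNorm (z - w), hα.le, hle, (euclNorm (z - w))⁻¹ • (z - w),
        ?_, ?_, ?_⟩
      · obtain ⟨x, hx⟩ := hzc
        obtain ⟨⟨xw, hxw⟩, -⟩ := hN w hwN
        exact ⟨(euclNorm (z - w))⁻¹ • (x - xw), by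
          rw [Matrix.mulVec_smul, Matrix.mulVec_sub, hx, hxw]⟩
      · rw [euclNorm_smul, abs_of_pos (inv_pos.2 hα), inv_mul_cancel₀ hα.ne']
      · rw [smul_smul, mul_inv_cancel₀ hα.ne', one_smul]
        abel
  -- the sup K over N × 𝒮
  set setK : Set ℝ :=
    {r | ∃ w ∈ N, ∃ z, (∃ x, A.mulVec x = z) ∧ euclNorm z = 1 ∧ r = |Qf S w z|} with hsetK
  obtain ⟨w₀, hw₀, -⟩ := hnet y hy hy1
  have hKne : setK.Nonempty := ⟨|Qf S w₀ y|, w₀, hw₀, y, hy, hy1, rfl⟩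
  have hKbdd : BddAbove setK := by
    refine ⟨C * C + 1, ?_⟩
    rintro r ⟨w, hw, z, hzc, hz1, rfl⟩
    exact hQb w z (hN w hw).2 hz1
  set K := sSup setK with hKdef
  have hmemK : ∀ w ∈ N, ∀ z, (∃ x, A.mulVec x = z) → euclNorm z = 1 → |Qf S w z| ≤ K :=
    fun w hw z hzc hz1 => le_csSup hKbdd ⟨w, hw, z, hzc, hz1, rfl⟩
  have hKstep : K ≤ ε + K / 2 := by
    apply csSup_le hKne
    rintro r ⟨w, hw, z, hzc, hz1, rfl⟩
    obtain ⟨w', hw', α, hα0, hα2, z', hz'c, hz'1, hzeq⟩ := decomp z hzc hz1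
    have hQsplit : Qf S w z = Qf S w w' + α * Qf S w z' := by
      rw [hzeq, Qf_add_right, Qf_smul_right]
    have h1 : |Qf S w w'| ≤ ε := hS w hw w' hw'
    have h2 : |Qf S w z'| ≤ K := hmemK w hw z' hz'c hz'1
    calc |Qf S w z| ≤ |Qf S w w'| + |α * Qf S w z'| := by
          rw [hQsplit]; exact abs_add_le _ _
      _ = |Qf S w w'| + α * |Qf S w z'| := by rw [abs_mul, abs_of_nonneg hα0]
      _ ≤ ε + (1 / 2) * K :=
          add_le_add h1 (mul_le_mul hα2 h2 (abs_nonneg _) (by norm_num))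
      _ = ε + K / 2 := by ring
  have hK2 : K ≤ 2 * ε := by linarith
  -- the sup L over the diagonal of 𝒮 × 𝒮
  set setL : Set ℝ :=
    {r | ∃ z, (∃ x, A.mulVec x = z) ∧ euclNorm z = 1 ∧ r = |Qf S z z|} with hsetL
  have hLne : setL.Nonempty := ⟨|Qf S y y|, y, hy, hy1, rfl⟩
  have hLbdd : BddAbove setL := by
    refine ⟨C * C + 1, ?_⟩
    rintro r ⟨z, hzc, hz1, rfl⟩
    exact hQb z z hz1 hz1
  set L := sSup setL with hLdef
  have hLstep : L ≤ 3 * ε + L / 4 := by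
    apply csSup_le hLne
    rintro r ⟨z, hzc, hz1, rfl⟩
    obtain ⟨w', hw', α, hα0, hα2, z', hz'c, hz'1, hzeq⟩ := decomp z hzc hz1
    have hsplit : Qf S z z = Qf S w' w' + 2 * α * Qf S w' z' + α ^ 2 * Qf S z' z' := by
      rw [hzeq]; exact Qf_expand S w' z' α
    have h1 : |Qf S w' w'| ≤ ε := hS w' hw' w' hw'
    have h2 : |Qf S w' z'| ≤ K := hmemK w' hw' z' hz'c hz'1
    have h3 : |Qf S z' z'| ≤ L := le_csSup hLbdd ⟨z', hz'c, hz'1, rfl⟩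
    have e2 : |2 * α * Qf S w' z'| ≤ 2 * ε := by
      rw [abs_mul]
      have hh : |2 * α| ≤ 1 := by
        rw [abs_of_nonneg (by linarith)]; linarith
      calc |2 * α| * |Qf S w' z'| ≤ 1 * K :=
            mul_le_mul hh h2 (abs_nonneg _) (by norm_num)
        _ = K := one_mul K
        _ ≤ 2 * ε := hK2
    have e3 : |α ^ 2 * Qf S z' z'| ≤ (1 / 4) * L := by
      rw [abs_mul]
      have hh : |α ^ 2| ≤ 1 / 4 := by
        rw [abs_of_nonneg (sq_nonneg _)]; nlinarith
      exact mul_le_mul hh h3 (abs_nonneg _) (by norm_num)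
    calc |Qf S z z|
        ≤ |Qf S w' w' + 2 * α * Qf S w' z'| + |α ^ 2 * Qf S z' z'| := by
          rw [hsplit]; exact abs_add_le _ _
      _ ≤ |Qf S w' w'| + |2 * α * Qf S w' z'| + |α ^ 2 * Qf S z' z'| := by
          have := abs_add_le (Qf S w' w') (2 * α * Qf S w' z')
          linarith
      _ ≤ ε + 2 * ε + (1 / 4) * L := by
          have := add_le_add (add_le_add h1 e2) e3
          linarith
      _ = 3 * ε + L / 4 := by ring
  have hL4 : L ≤ 4 * ε := by linarith
  have hfin : |Qf S y y| ≤ L := le_csSup hLbdd ⟨y, hy, hy1, rfl⟩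
  have hQyy : Qf S y y = euclNorm (S.mulVec y) ^ 2 - 1 := by
    simp [Qf, dotp_self, hy1]
  rw [← hQyy]
  exact hfin.trans hL4
end

section
/- Let M be a real n×d matrix, b ∈ ℝⁿ, and x* ∈ ℝ^d with Mᵀ(Mx* − b) = 0 (the normal equations). Suppose 0 ≤ ε₀ ≤ 1 and for all x ∈ ℝ^d, (1 − ε₀)‖x‖₂ ≤ ‖Mx‖₂ ≤ (1 + ε₀)‖x‖₂ (i.e., all singular values of M lie in [1 − ε₀, 1 + ε₀]). Then for any x ∈ ℝ^d, the iterate x′ = x + Mᵀ(b − Mx) satisfies ‖M(x′ − x*)‖₂ ≤ 3ε₀·‖M(x − x*)‖₂. -/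
set_option maxHeartbeats 1000000


open Matrix

lemma dot_self_nonneg' {k : ℕ} (v : Fin k → ℝ) : 0 ≤ v ⬝ᵥ v :=
  Finset.sum_nonneg fun i _ => mul_self_nonneg _

lemma euclNorm_eq_sqrt_dot {k : ℕ} (v : Fin k → ℝ) : euclNorm v = Real.sqrt (v ⬝ᵥ v) := by
  simp [euclNorm, dotProduct, sq]

lemma euclNorm_nonneg' {k : ℕ} (v : Fin k → ℝ) : 0 ≤ euclNorm v := Real.sqrt_nonneg _

lemma euclNorm_sq' {k : ℕ} (v : Fin k → ℝ) : euclNorm v ^ 2 = v ⬝ᵥ v := by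
  rw [euclNorm_eq_sqrt_dot, Real.sq_sqrt (dot_self_nonneg' v)]

lemma dot_CS' {k : ℕ} (u w : Fin k → ℝ) : (u ⬝ᵥ w) ^ 2 ≤ (u ⬝ᵥ u) * (w ⬝ᵥ w) := by
  simpa [dotProduct, sq] using Finset.sum_mul_sq_le_sq_mul_sq Finset.univ u w

lemma dot_adj' {a b : ℕ} (N : Matrix (Fin a) (Fin b) ℝ) (w : Fin b → ℝ) (u : Fin a → ℝ) :
    N.mulVec w ⬝ᵥ u = w ⬝ᵥ Nᵀ.mulVec u := by
  rw [dotProduct_mulVec, vecMul_transpose]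

/-- bilinear expansion of the quadratic form `v ↦ ⟨Nv, Nv⟩`. -/
lemma bil_expand {a b : ℕ} (N : Matrix (Fin a) (Fin b) ℝ) (p q : ℝ) (e s : Fin b → ℝ) :
    N.mulVec (p • e + q • s) ⬝ᵥ N.mulVec (p • e + q • s)
      = p^2 * (N.mulVec e ⬝ᵥ N.mulVec e) + 2*p*q * (N.mulVec e ⬝ᵥ N.mulVec s)
        + q^2 * (N.mulVec s ⬝ᵥ N.mulVec s) := by
  simp only [Matrix.mulVec_add, Matrix.mulVec_smul, dotProduct_add, add_dotProduct,
    smul_dotProduct, dotProduct_smul, smul_eq_mul,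
    dotProduct_comm (N.mulVec s) (N.mulVec e)]
  ring

/-- one step of iterative refinement for well-conditioned least squares. -/
theorem stmt8 {n d : ℕ} (M : Matrix (Fin n) (Fin d) ℝ) (b : Fin n → ℝ) (xstar : Fin d → ℝ)
    (hnormal : Mᵀ.mulVec (M.mulVec xstar - b) = 0)
    (ε₀ : ℝ) (hε₀0 : 0 ≤ ε₀) (hε₀1 : ε₀ ≤ 1)
    (hsv : ∀ x : Fin d → ℝ,
      (1 - ε₀) * euclNorm x ≤ euclNorm (M.mulVec x) ∧
      euclNorm (M.mulVec x) ≤ (1 + ε₀) * euclNorm x)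
    (x : Fin d → ℝ) :
    euclNorm (M.mulVec ((x + Mᵀ.mulVec (b - M.mulVec x)) - xstar))
      ≤ 3 * ε₀ * euclNorm (M.mulVec (x - xstar)) := by
  classical
  set A : Matrix (Fin d) (Fin d) ℝ := Mᵀ * M with hAdef
  set e : Fin d → ℝ := x - xstar with hedef
  have hAe : ∀ v : Fin d → ℝ, A.mulVec v = Mᵀ.mulVec (M.mulVec v) := by
    intro v; rw [hAdef, ← Matrix.mulVec_mulVec]
  have hadj : ∀ u v : Fin d → ℝ,
      M.mulVec u ⬝ᵥ M.mulVec v = u ⬝ᵥ A.mulVec v := by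
    intro u v; rw [hAe v]; exact dot_adj' M u (M.mulVec v)
  have hAsym : ∀ u v : Fin d → ℝ, A.mulVec u ⬝ᵥ v = u ⬝ᵥ A.mulVec v := by
    intro u v
    rw [hAe u, dot_adj' Mᵀ (M.mulVec u) v, Matrix.transpose_transpose, hadj]
  -- normal equations: reduce the iterate error
  have hb : Mᵀ.mulVec b = Mᵀ.mulVec (M.mulVec xstar) := by
    have h := hnormal
    rw [Matrix.mulVec_sub, sub_eq_zero] at h
    exact h.symm
  set s : Fin d → ℝ := e - A.mulVec e with hsdef
  have hvec : x + Mᵀ.mulVec (b - M.mulVec x) - xstar = s := by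
    rw [hsdef, hAe, hedef, Matrix.mulVec_sub M x xstar, Matrix.mulVec_sub,
      Matrix.mulVec_sub, hb]
    abel
  rw [hvec]
  -- squared singular value bounds
  have hp : ∀ v : Fin d → ℝ,
      (1-ε₀)^2 * (v ⬝ᵥ v) ≤ M.mulVec v ⬝ᵥ M.mulVec v := by
    intro v
    have h := (hsv v).1
    have h1 : 0 ≤ (1-ε₀) * euclNorm v :=
      mul_nonneg (by linarith) (euclNorm_nonneg' v)
    have h2 := mul_self_le_mul_self h1 h
    calc (1-ε₀)^2 * (v ⬝ᵥ v) = ((1-ε₀)*euclNorm v) * ((1-ε₀)*euclNorm v) := by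
          rw [← euclNorm_sq' v]; ring
      _ ≤ euclNorm (M.mulVec v) * euclNorm (M.mulVec v) := h2
      _ = M.mulVec v ⬝ᵥ M.mulVec v := by rw [← euclNorm_sq']; ring
  have hq : ∀ v : Fin d → ℝ,
      M.mulVec v ⬝ᵥ M.mulVec v ≤ (1+ε₀)^2 * (v ⬝ᵥ v) := by
    intro v
    have h := (hsv v).2
    have h2 := mul_self_le_mul_self (euclNorm_nonneg' _) h
    calc M.mulVec v ⬝ᵥ M.mulVec v
        = euclNorm (M.mulVec v) * euclNorm (M.mulVec v) := by rw [← euclNorm_sq']; ring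
      _ ≤ ((1+ε₀)*euclNorm v) * ((1+ε₀)*euclNorm v) := h2
      _ = (1+ε₀)^2 * (v ⬝ᵥ v) := by rw [← euclNorm_sq' v]; ring
  -- upper bound on ‖Av‖² : ‖Av‖² ≤ (1+ε₀)² ‖Mv‖²
  have hR_up : ∀ v : Fin d → ℝ,
      A.mulVec v ⬝ᵥ A.mulVec v ≤ (1+ε₀)^2 * (M.mulVec v ⬝ᵥ M.mulVec v) := by
    intro v
    have hR0 : 0 ≤ A.mulVec v ⬝ᵥ A.mulVec v := dot_self_nonneg' _
    have hT0 : 0 ≤ M.mulVec v ⬝ᵥ M.mulVec v := dot_self_nonneg' _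
    have hRe : A.mulVec v ⬝ᵥ A.mulVec v
        = M.mulVec v ⬝ᵥ M.mulVec (A.mulVec v) := by
      rw [hAsym v (A.mulVec v), ← hadj]
    have hcs : (A.mulVec v ⬝ᵥ A.mulVec v)^2
        ≤ (M.mulVec v ⬝ᵥ M.mulVec v) * (M.mulVec (A.mulVec v) ⬝ᵥ M.mulVec (A.mulVec v)) := by
      rw [hRe]; exact dot_CS' _ _
    have hqq := hq (A.mulVec v)
    rcases hR0.lt_or_eq with h|h
    · have hmul : (A.mulVec v ⬝ᵥ A.mulVec v) * (A.mulVec v ⬝ᵥ A.mulVec v)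
          ≤ ((1+ε₀)^2 * (M.mulVec v ⬝ᵥ M.mulVec v)) * (A.mulVec v ⬝ᵥ A.mulVec v) := by
        nlinarith [mul_le_mul_of_nonneg_left hqq hT0]
      exact le_of_mul_le_mul_right hmul h
    · rw [← h]; positivity
  -- lower bound on ‖Av‖² : (1-ε₀)² ‖Mv‖² ≤ ‖Av‖²
  have hR_low : ∀ v : Fin d → ℝ,
      (1-ε₀)^2 * (M.mulVec v ⬝ᵥ M.mulVec v) ≤ A.mulVec v ⬝ᵥ A.mulVec v := by
    intro v
    have hR0 : 0 ≤ A.mulVec v ⬝ᵥ A.mulVec v := dot_self_nonneg' _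
    have hT0 : 0 ≤ M.mulVec v ⬝ᵥ M.mulVec v := dot_self_nonneg' _
    have hD0 : 0 ≤ v ⬝ᵥ v := dot_self_nonneg' _
    have hTv : M.mulVec v ⬝ᵥ M.mulVec v = v ⬝ᵥ A.mulVec v := hadj v v
    have hcs : (M.mulVec v ⬝ᵥ M.mulVec v)^2 ≤ (v ⬝ᵥ v) * (A.mulVec v ⬝ᵥ A.mulVec v) := by
      rw [hTv]; exact dot_CS' _ _
    have hpv := hp v
    rcases hT0.lt_or_eq with h|h
    · have hmul : ((1-ε₀)^2 * (M.mulVec v ⬝ᵥ M.mulVec v)) * (M.mulVec v ⬝ᵥ M.mulVec v)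
          ≤ (A.mulVec v ⬝ᵥ A.mulVec v) * (M.mulVec v ⬝ᵥ M.mulVec v) := by
        nlinarith [mul_le_mul_of_nonneg_right hpv hR0, sq_nonneg (1-ε₀)]
      exact le_of_mul_le_mul_right hmul h
    · rw [← h]
      nlinarith [hR0]
  -- the two-sided bound on the form F v = ‖Mv‖² - ‖Av‖²
  have hup : ∀ v : Fin d → ℝ,
      (M.mulVec v ⬝ᵥ M.mulVec v) - (A.mulVec v ⬝ᵥ A.mulVec v)
        ≤ (2*ε₀+ε₀^2) * (M.mulVec v ⬝ᵥ M.mulVec v) := by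
    intro v
    have hT0 : 0 ≤ M.mulVec v ⬝ᵥ M.mulVec v := dot_self_nonneg' _
    nlinarith [hR_low v, mul_nonneg (mul_nonneg hε₀0 hε₀0) hT0]
  have hlow : ∀ v : Fin d → ℝ,
      -((2*ε₀+ε₀^2) * (M.mulVec v ⬝ᵥ M.mulVec v))
        ≤ (M.mulVec v ⬝ᵥ M.mulVec v) - (A.mulVec v ⬝ᵥ A.mulVec v) := by
    intro v
    nlinarith [hR_up v]
  -- abbreviations
  have hMs : M.mulVec s = M.mulVec e - M.mulVec (A.mulVec e) := by
    rw [hsdef, Matrix.mulVec_sub]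
  have hXB : M.mulVec s ⬝ᵥ M.mulVec s
      = M.mulVec e ⬝ᵥ M.mulVec s - A.mulVec e ⬝ᵥ A.mulVec s := by
    nth_rewrite 1 [hMs]
    rw [sub_dotProduct, hadj (A.mulVec e) s]
  have hX0 : 0 ≤ M.mulVec s ⬝ᵥ M.mulVec s := dot_self_nonneg' _
  have hT0 : 0 ≤ M.mulVec e ⬝ᵥ M.mulVec e := dot_self_nonneg' _
  -- degenerate case : M e = 0
  by_cases htt : M.mulVec e ⬝ᵥ M.mulVec e = 0
  · have hMe0 : M.mulVec e = 0 := dotProduct_self_eq_zero.mp htt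
    have hAe0 : A.mulVec e = 0 := by rw [hAe, hMe0, Matrix.mulVec_zero]
    have hse : s = e := by rw [hsdef, hAe0, sub_zero]
    have : euclNorm (M.mulVec s) = 0 := by
      rw [hse, hMe0]; simp [euclNorm]
    rw [this]
    exact mul_nonneg (by linarith) (euclNorm_nonneg' _)
  · have htt0 : 0 < M.mulVec e ⬝ᵥ M.mulVec e := lt_of_le_of_ne hT0 (Ne.symm htt)
    by_cases hXz : M.mulVec s ⬝ᵥ M.mulVec s = 0
    · have : euclNorm (M.mulVec s) = 0 := by
        rw [euclNorm_eq_sqrt_dot, hXz, Real.sqrt_zero]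
      rw [this]
      exact mul_nonneg (mul_nonneg (by norm_num) hε₀0) (euclNorm_nonneg' _)
    · have hX0' : 0 < M.mulVec s ⬝ᵥ M.mulVec s := lt_of_le_of_ne hX0 (Ne.symm hXz)
      set X : ℝ := M.mulVec s ⬝ᵥ M.mulVec s with hXdef
      set tt : ℝ := M.mulVec e ⬝ᵥ M.mulVec e with httdef
      set a : ℝ := Real.sqrt X with hadef
      set c : ℝ := Real.sqrt tt with hcdef
      have ha0 : 0 ≤ a := Real.sqrt_nonneg _
      have hc0 : 0 ≤ c := Real.sqrt_nonneg _
      have ha2 : a^2 = X := Real.sq_sqrt hX0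
      have hc2 : c^2 = tt := Real.sq_sqrt hT0
      -- the polarization inequality
      have h1 := hup (a • e + c • s)
      have h2 := hlow (a • e + (-c) • s)
      rw [bil_expand M a c e s, bil_expand A a c e s] at h1
      rw [bil_expand M a (-c) e s, bil_expand A a (-c) e s] at h2
      have hPQ : M.mulVec e ⬝ᵥ M.mulVec s = X + A.mulVec e ⬝ᵥ A.mulVec s := by
        rw [hXB]; ring
      rw [hPQ, ← hXdef, ← httdef] at h1 h2
      have key : 4*(a*c)*X ≤ (2*ε₀+ε₀^2) * (2*a^2*tt + 2*c^2*X) := by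
        linarith [h1, h2]
      rw [ha2, hc2] at key
      -- divide by 4X
      have hmul4 : (a*c) * (4*X) ≤ ((2*ε₀+ε₀^2)*tt) * (4*X) := by linarith [key]
      have hac_le : a*c ≤ (2*ε₀+ε₀^2)*tt :=
        le_of_mul_le_mul_right hmul4 (by positivity)
      have hsq := mul_self_le_mul_self (mul_nonneg ha0 hc0) hac_le
      have hacX : (a*c)*(a*c) = X*tt := by rw [← ha2, ← hc2]; ring
      have hXtt : X * tt ≤ ((2*ε₀+ε₀^2)*tt) * ((2*ε₀+ε₀^2)*tt) := by
        linarith [hsq, hacX]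
      have hXle : X ≤ (2*ε₀+ε₀^2)^2 * tt := by
        have h' : ((2*ε₀+ε₀^2)*tt) * ((2*ε₀+ε₀^2)*tt) = ((2*ε₀+ε₀^2)^2 * tt) * tt := by
          ring
        rw [h'] at hXtt
        exact le_of_mul_le_mul_right hXtt htt0
      have hXfin : X ≤ 9*ε₀^2 * tt := by
        nlinarith [hXle,
          mul_nonneg (mul_nonneg (sq_nonneg ε₀) (sub_nonneg.2 hε₀1)) hT0,
          mul_nonneg (mul_nonneg (mul_nonneg hε₀0 (sq_nonneg ε₀)) (sub_nonneg.2 hε₀1)) hT0]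
      -- conclude with square roots
      have hfin : Real.sqrt X ≤ Real.sqrt ((3*ε₀)^2 * tt) := by
        apply Real.sqrt_le_sqrt; nlinarith [hXfin]
      rw [euclNorm_eq_sqrt_dot (M.mulVec s), euclNorm_eq_sqrt_dot (M.mulVec e),
        ← hXdef, ← httdef]
      calc Real.sqrt X ≤ Real.sqrt ((3*ε₀)^2 * tt) := hfin
        _ = (3*ε₀) * Real.sqrt tt := by
            rw [Real.sqrt_mul (sq_nonneg _), Real.sqrt_sq (by positivity)]
        _ = 3 * ε₀ * Real.sqrt tt := by ring
end

section
/- Let A be a real n×d matrix, let U be a real d×c matrix with orthonormal columns (so Uᵀ has orthonormal rows), and let k ≤ c be a positive integer. Suppose B is a best rank-k approximation to AU in Frobenius norm, i.e., B is an n×c matrix of rank at most k such that ‖AU − B‖_F ≤ ‖AU − Z‖_F for every n×c matrix Z of rank at most k. Then B·Uᵀ is a best rank-k approximation to A among matrices with rows in the row space of Uᵀ: for every n×c matrix Z of rank at most k, ‖A − B·Uᵀ‖_F ≤ ‖A − Z·Uᵀ‖_F. -/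
open Matrix

/-- The Frobenius norm of a real matrix. -/
noncomputable def frobNorm {m n : ℕ} (M : Matrix (Fin m) (Fin n) ℝ) : ℝ :=
  Real.sqrt (∑ i, ∑ j, (M i j) ^ 2)

lemma sqSum_eq_trace {m n : ℕ} (M : Matrix (Fin m) (Fin n) ℝ) :
    (∑ i, ∑ j, (M i j) ^ 2) = (M * Mᵀ).trace := by
  simp [Matrix.trace, Matrix.mul_apply, Matrix.diag, pow_two]

lemma sqSum_nonneg {m n : ℕ} (M : Matrix (Fin m) (Fin n) ℝ) :
    0 ≤ ∑ i, ∑ j, (M i j) ^ 2 :=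
  Finset.sum_nonneg fun _ _ => Finset.sum_nonneg fun _ _ => sq_nonneg _

lemma key {n d c : ℕ} (A : Matrix (Fin n) (Fin d) ℝ) (U : Matrix (Fin d) (Fin c) ℝ)
    (hU : Uᵀ * U = 1) (Z : Matrix (Fin n) (Fin c) ℝ) :
    (∑ i, ∑ j, ((A - Z * Uᵀ) i j) ^ 2) =
      (∑ i, ∑ j, ((A - A * U * Uᵀ) i j) ^ 2) + (∑ i, ∑ j, ((A * U - Z) i j) ^ 2) := by
  have hUX : ∀ (m : ℕ) (X : Matrix (Fin c) (Fin m) ℝ), Uᵀ * (U * X) = X := by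
    intro m X; rw [← Matrix.mul_assoc, hU, Matrix.one_mul]
  rw [sqSum_eq_trace, sqSum_eq_trace, sqSum_eq_trace, ← Matrix.trace_add]
  congr 1
  simp only [Matrix.sub_mul, Matrix.mul_sub, Matrix.transpose_sub, Matrix.transpose_mul,
    Matrix.transpose_transpose, Matrix.mul_assoc, hUX]
  abel

/-- if `B` is a best rank-`k` approximation to `AU` in Frobenius norm,
then `B Uᵀ` is a best rank-`k` approximation to `A` among matrices whose rows lie in
the row space of `Uᵀ`. -/
theorem stmt9 {n d c : ℕ} (A : Matrix (Fin n) (Fin d) ℝ) (U : Matrix (Fin d) (Fin c) ℝ)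
    (hU : Uᵀ * U = 1) (k : ℕ) (hk : 0 < k) (hkc : k ≤ c)
    (B : Matrix (Fin n) (Fin c) ℝ) (hBrank : B.rank ≤ k)
    (hBopt : ∀ Z : Matrix (Fin n) (Fin c) ℝ, Z.rank ≤ k →
      frobNorm (A * U - B) ≤ frobNorm (A * U - Z)) :
    ∀ Z : Matrix (Fin n) (Fin c) ℝ, Z.rank ≤ k →
      frobNorm (A - B * Uᵀ) ≤ frobNorm (A - Z * Uᵀ) := by
  intro Z hZ
  have h := hBopt Z hZ
  unfold frobNorm at *
  have hB' : (∑ i, ∑ j, ((A * U - B) i j) ^ 2) ≤ (∑ i, ∑ j, ((A * U - Z) i j) ^ 2) := by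
    nlinarith [Real.sq_sqrt (sqSum_nonneg (A * U - B)), Real.sq_sqrt (sqSum_nonneg (A * U - Z)),
      Real.sqrt_nonneg (∑ i, ∑ j, ((A * U - B) i j) ^ 2),
      Real.sqrt_nonneg (∑ i, ∑ j, ((A * U - Z) i j) ^ 2)]
  apply Real.sqrt_le_sqrt
  rw [key A U hU B, key A U hU Z]
  linarith
end

section
/- Let A be a real m×n matrix, let Z be a real n×k matrix with ZᵀZ = I_k, and set E = A − AZZᵀ (so A = AZZᵀ + E). Let S be a real n×c matrix and suppose W is a real c×k matrix with (ZᵀS)W = I_k (a right inverse of ZᵀS; in particular such a W exists whenever rank(ZᵀS) = k, e.g., the Moore–Penrose pseudoinverse). Then ‖A − A·S·W·Zᵀ‖_F² = ‖E‖_F² + ‖E·S·W·Zᵀ‖_F² ≤ ‖E‖_F² + ‖E·S·W‖_F². In particular, A·S·W·Zᵀ is a matrix of rank at most k in the column space of C = AS with ‖A − ASWZᵀ‖_F² ≤ ‖E‖_F² + ‖ESW‖_F². -/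
open Matrix

lemma frobSq {m n : ℕ} (M : Matrix (Fin m) (Fin n) ℝ) :
    frobNorm M ^ 2 = (Mᵀ * M).trace := by
  unfold frobNorm
  rw [Real.sq_sqrt (by positivity)]
  rw [Finset.sum_comm]
  simp [Matrix.trace, Matrix.mul_apply, Matrix.diag, sq]

/-- structural lemma for column-based low rank approximation. With
`E = A − A Z Zᵀ` and `W` a right inverse of `Zᵀ S`, the matrix `A S W Zᵀ` has rank at
most `k`, lies in the column space of `A S`, and satisfies
`‖A − A S W Zᵀ‖_F² = ‖E‖_F² + ‖E S W Zᵀ‖_F² ≤ ‖E‖_F² + ‖E S W‖_F²`. -/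
theorem stmt10 {m n k c : ℕ} (A : Matrix (Fin m) (Fin n) ℝ) (Z : Matrix (Fin n) (Fin k) ℝ)
    (hZ : Zᵀ * Z = 1) (S : Matrix (Fin n) (Fin c) ℝ) (W : Matrix (Fin c) (Fin k) ℝ)
    (hW : Zᵀ * S * W = 1) :
    frobNorm (A - A * S * W * Zᵀ) ^ 2
        = frobNorm (A - A * Z * Zᵀ) ^ 2 + frobNorm ((A - A * Z * Zᵀ) * S * W * Zᵀ) ^ 2 ∧
    frobNorm (A - A * Z * Zᵀ) ^ 2 + frobNorm ((A - A * Z * Zᵀ) * S * W * Zᵀ) ^ 2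
        ≤ frobNorm (A - A * Z * Zᵀ) ^ 2 + frobNorm ((A - A * Z * Zᵀ) * S * W) ^ 2 ∧
    (A * S * W * Zᵀ).rank ≤ k ∧
    (∃ X : Matrix (Fin c) (Fin n) ℝ, A * S * W * Zᵀ = (A * S) * X) := by
  set E : Matrix (Fin m) (Fin n) ℝ := A - A * Z * Zᵀ with hEdef
  have hEZ : E * Z = 0 := by
    rw [hEdef, Matrix.sub_mul, Matrix.mul_assoc (A * Z) Zᵀ Z, hZ, Matrix.mul_one]
    simp
  have hdec : A - A * S * W * Zᵀ = E - E * S * W * Zᵀ := by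
    rw [hEdef]
    have h1 : A * Z * Zᵀ * S * W = A * Z := by
      rw [Matrix.mul_assoc (A * Z) Zᵀ S, Matrix.mul_assoc (A * Z) (Zᵀ * S) W, hW,
        Matrix.mul_one]
    simp only [Matrix.sub_mul, h1]
    abel
  set D : Matrix (Fin m) (Fin n) ℝ := E * S * W * Zᵀ with hDdef
  clear_value D
  clear_value E
  -- cross term vanishes
  have hZE : Zᵀ * (Eᵀ * E * S * W) = 0 := by
    simp only [← Matrix.mul_assoc, ← Matrix.transpose_mul, hEZ]
    simp
  have hcross1 : (Eᵀ * D).trace = 0 := by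
    have h1 : Eᵀ * D = (Eᵀ * E * S * W) * Zᵀ := by
      rw [hDdef]; simp only [Matrix.mul_assoc]
    rw [h1, Matrix.trace_mul_comm, hZE, Matrix.trace_zero]
  have hcross2 : (Dᵀ * E).trace = 0 := by
    have : Dᵀ * E = (Eᵀ * D)ᵀ := by simp [Matrix.transpose_mul]
    rw [this, Matrix.trace_transpose, hcross1]
  -- ‖M Zᵀ‖² = ‖M‖²
  have hproj : ∀ (M : Matrix (Fin m) (Fin c) ℝ) (W' : Matrix (Fin c) (Fin k) ℝ),
      frobNorm (M * W' * Zᵀ) ^ 2 = frobNorm (M * W') ^ 2 := by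
    intro M W'
    rw [frobSq, frobSq]
    have h2 : (M * W' * Zᵀ)ᵀ * (M * W' * Zᵀ) = Z * ((M * W')ᵀ * (M * W')) * Zᵀ := by
      simp [Matrix.transpose_mul, Matrix.mul_assoc]
    rw [h2, Matrix.trace_mul_cycle, hZ, Matrix.one_mul]
  have hmain : frobNorm (A - A * S * W * Zᵀ) ^ 2
      = frobNorm E ^ 2 + frobNorm D ^ 2 := by
    rw [hdec, frobSq, frobSq, frobSq]
    have hexp : (E - D)ᵀ * (E - D) = Eᵀ * E - Eᵀ * D - Dᵀ * E + Dᵀ * D := by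
      rw [Matrix.transpose_sub, Matrix.sub_mul, Matrix.mul_sub, Matrix.mul_sub]
      abel
    rw [hexp]
    simp [Matrix.trace_add, Matrix.trace_sub, hcross1, hcross2]
  refine ⟨hmain, ?_, ?_, W * Zᵀ, by simp only [Matrix.mul_assoc]⟩
  · exact le_of_eq (by rw [hDdef, hproj (E * S) W])
  · calc (A * S * W * Zᵀ).rank ≤ Zᵀ.rank := Matrix.rank_mul_le_right _ _
      _ ≤ k := by simpa using Zᵀ.rank_le_card_height
end

section
/- (Dual Set Spectral-Frobenius Sparsification.) Let v₁, …, v_n ∈ ℝ^k with k < n and Σ_{i=1}^n vᵢvᵢᵀ = I_k, and let a₁, …, a_n ∈ ℝ^ℓ be arbitrary vectors. Let r be an integer with k < r ≤ n. Then there exist nonnegative weights s₁, …, s_n ≥ 0, at most r of which are nonzero, such that: (1) for every x ∈ ℝ^k, xᵀ(Σ_{i=1}^n sᵢ vᵢvᵢᵀ)x ≥ (1 − √(k/r))²·‖x‖₂² (i.e., the smallest eigenvalue of Σ sᵢvᵢvᵢᵀ is at least (1 − √(k/r))²), and (2) trace(Σ_{i=1}^n sᵢ aᵢaᵢᵀ)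 ≤ Σ_{i=1}^n ‖aᵢ‖₂². -/
open Matrix

set_option linter.unusedSectionVars false

namespace BSS

variable {m : Type*} [Fintype m] [DecidableEq m]

lemma psd_quad {M : Matrix m m ℝ} (hM : M.PosSemidef) (x : m → ℝ) :
    0 ≤ x ⬝ᵥ M *ᵥ x := by simpa using hM.dotProduct_mulVec_nonneg x

lemma pd_quad {M : Matrix m m ℝ} (hM : M.PosDef) {x : m → ℝ} (hx : x ≠ 0) :
    0 < x ⬝ᵥ M *ᵥ x := by simpa using hM.dotProduct_mulVec_pos hx

open scoped MatrixOrder in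
lemma psd_sqrt {M : Matrix m m ℝ} (hM : M.PosSemidef) :
    ∃ S : Matrix m m ℝ, S.IsHermitian ∧ S * S = M :=
  ⟨CFC.sqrt M, (CFC.sqrt_nonneg M).posSemidef.isHermitian, CFC.sqrt_mul_sqrt_self M hM.nonneg⟩

lemma symm_of_hermitian {M : Matrix m m ℝ} (hM : M.IsHermitian) : Mᵀ = M := by
  simpa [Matrix.conjTranspose_eq_transpose_of_trivial] using hM.eq

lemma dot_mulVec_symm {M : Matrix m m ℝ} (hM : M.IsHermitian) (x y : m → ℝ) :
    x ⬝ᵥ M *ᵥ y = y ⬝ᵥ M *ᵥ x := by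
  have h := symm_of_hermitian hM
  have hij : ∀ i j, M i j = M j i := fun i j => by
    conv_lhs => rw [← h]
    rw [Matrix.transpose_apply]
  simp only [dotProduct, Matrix.mulVec, Finset.mul_sum]
  rw [Finset.sum_comm]
  refine Finset.sum_congr rfl fun i _ => Finset.sum_congr rfl fun j _ => ?_
  rw [hij i j]; ring

lemma mulVec_vmv (u w x : m → ℝ) : (vecMulVec u w) *ᵥ x = (w ⬝ᵥ x) • u := by
  funext i
  simp only [Matrix.mulVec, Matrix.vecMulVec_apply, dotProduct, Pi.smul_apply, smul_eq_mul,
    Finset.sum_mul, Finset.mul_sum]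
  exact Finset.sum_congr rfl fun j _ => by ring

lemma vmv_transpose (u w : m → ℝ) : (vecMulVec u w)ᵀ = vecMulVec w u := by
  ext i j; simp [Matrix.vecMulVec_apply, mul_comm]

lemma vmv_isHermitian (v : m → ℝ) : (vecMulVec v v).IsHermitian := by
  rw [Matrix.IsHermitian, Matrix.conjTranspose_eq_transpose_of_trivial, vmv_transpose]

lemma dot_vmv (u w x y : m → ℝ) : x ⬝ᵥ (vecMulVec u w) *ᵥ y = (x ⬝ᵥ u) * (w ⬝ᵥ y) := by
  rw [mulVec_vmv, dotProduct_smul, smul_eq_mul, mul_comm]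

lemma vmv_posSemidef (v : m → ℝ) : (vecMulVec v v).PosSemidef := by
  refine Matrix.PosSemidef.of_dotProduct_mulVec_nonneg (vmv_isHermitian v) fun x => ?_
  have : (star x) ⬝ᵥ (vecMulVec v v) *ᵥ x = (x ⬝ᵥ v) * (v ⬝ᵥ x) := by
    simpa using dot_vmv v v x x
  rw [this, dotProduct_comm v x]
  exact mul_self_nonneg _

lemma mul_vmv (M : Matrix m m ℝ) (u w : m → ℝ) :
    M * vecMulVec u w = vecMulVec (M *ᵥ u) w := by
  ext i j
  simp [Matrix.mul_apply, Matrix.vecMulVec_apply, Matrix.mulVec, dotProduct,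
    Finset.sum_mul, mul_assoc]

lemma vmv_mul (M : Matrix m m ℝ) (u w : m → ℝ) :
    vecMulVec u w * M = vecMulVec u (Mᵀ *ᵥ w) := by
  ext i j
  simp [Matrix.mul_apply, Matrix.vecMulVec_apply, Matrix.mulVec, dotProduct,
    Finset.mul_sum, mul_assoc, mul_comm, mul_left_comm]

lemma trace_vmv (u w : m → ℝ) : trace (vecMulVec u w) = w ⬝ᵥ u := by
  simp [Matrix.trace, Matrix.diag, Matrix.vecMulVec_apply, dotProduct, mul_comm]

lemma trace_mul_vmv (M : Matrix m m ℝ) (u w : m → ℝ) :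
    trace (M * vecMulVec u w) = w ⬝ᵥ (M *ᵥ u) := by
  rw [mul_vmv, trace_vmv]

lemma trace_nonneg_of_psd {M : Matrix m m ℝ} (hM : M.PosSemidef) : 0 ≤ trace M := by
  rw [Matrix.trace]
  refine Finset.sum_nonneg fun i _ => ?_
  have h := psd_quad hM (Pi.single i 1)
  simpa [Matrix.mulVec_single, single_dotProduct, Matrix.diag] using h

lemma trace_pos_of_pd [Nonempty m] {M : Matrix m m ℝ} (hM : M.PosDef) : 0 < trace M := by
  rw [Matrix.trace]
  refine Finset.sum_pos (fun i _ => ?_) Finset.univ_nonempty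
  have hne : (Pi.single i 1 : m → ℝ) ≠ 0 := fun hz => by simpa using congrFun hz i
  have h := pd_quad hM hne
  simpa [Matrix.mulVec_single, single_dotProduct, Matrix.diag] using h

lemma trace_mul_psd_nonneg {M N : Matrix m m ℝ} (hM : M.PosSemidef) (hN : N.PosSemidef) :
    0 ≤ trace (M * N) := by
  obtain ⟨S, hSh, hSS⟩ : ∃ S : Matrix m m ℝ, S.IsHermitian ∧ S * S = M :=
    psd_sqrt hM
  have h1 : trace (M * N) = trace (S * N * S) := by
    rw [← hSS]
    exact (Matrix.trace_mul_cycle S N S).symm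
  rw [h1]
  have h2 : (S * N * S).PosSemidef := by
    have := hN.mul_mul_conjTranspose_same S
    rwa [hSh.eq] at this
  exact trace_nonneg_of_psd h2

lemma trace_CS (X Y : Matrix m m ℝ) :
    trace (Xᵀ * Y) ^ 2 ≤ trace (Xᵀ * X) * trace (Yᵀ * Y) := by
  have key := Finset.sum_mul_sq_le_sq_mul_sq (Finset.univ : Finset (m × m))
    (fun p => X p.2 p.1) (fun p => Y p.2 p.1)
  have e1 : trace (Xᵀ * Y) = ∑ p : m × m, X p.2 p.1 * Y p.2 p.1 := by
    rw [← Finset.univ_product_univ, Finset.sum_product]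
    simp [Matrix.trace, Matrix.diag, Matrix.mul_apply, Matrix.transpose_apply]
  have e2 : trace (Xᵀ * X) = ∑ p : m × m, (X p.2 p.1) ^ 2 := by
    rw [← Finset.univ_product_univ, Finset.sum_product]
    simp [Matrix.trace, Matrix.diag, Matrix.mul_apply, Matrix.transpose_apply, pow_two]
  have e3 : trace (Yᵀ * Y) = ∑ p : m × m, (Y p.2 p.1) ^ 2 := by
    rw [← Finset.univ_product_univ, Finset.sum_product]
    simp [Matrix.trace, Matrix.diag, Matrix.mul_apply, Matrix.transpose_apply, pow_two]
  rw [e1, e2, e3]; exact key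

lemma quad_CS {M : Matrix m m ℝ} (hM : M.PosSemidef) (x y : m → ℝ) :
    (x ⬝ᵥ M *ᵥ y) ^ 2 ≤ (x ⬝ᵥ M *ᵥ x) * (y ⬝ᵥ M *ᵥ y) := by
  set a := y ⬝ᵥ M *ᵥ y with ha
  set b := x ⬝ᵥ M *ᵥ y with hb
  set c := x ⬝ᵥ M *ᵥ x with hc
  have key : ∀ t : ℝ, 0 ≤ a * (t * t) + (2 * b) * t + c := by
    intro t
    have h := psd_quad hM (x + t • y)
    have expand : (x + t • y) ⬝ᵥ M *ᵥ (x + t • y) = a * (t * t) + (2 * b) * t + c := by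
      rw [Matrix.mulVec_add, Matrix.mulVec_smul, add_dotProduct,
        smul_dotProduct, dotProduct_add, dotProduct_add,
        dotProduct_smul, dotProduct_smul]
      have hsym : y ⬝ᵥ M *ᵥ x = b := dot_mulVec_symm hM.isHermitian y x
      simp only [smul_eq_mul, hsym, ← ha, ← hb, ← hc]
      ring
    rw [expand] at h; exact h
  have hd := discrim_le_zero key
  rw [discrim] at hd
  nlinarith [hd]

lemma smul_vmv_psd {t : ℝ} (ht : 0 ≤ t) (v : m → ℝ) : (t • vecMulVec v v).PosSemidef := by
  refine Matrix.PosSemidef.of_dotProduct_mulVec_nonneg ?_ ?_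
  · rw [Matrix.IsHermitian, Matrix.conjTranspose_eq_transpose_of_trivial,
      Matrix.transpose_smul, vmv_transpose]
  · intro x
    have : (star x) ⬝ᵥ (t • vecMulVec v v) *ᵥ x = t * ((x ⬝ᵥ v) * (x ⬝ᵥ v)) := by
      have hd : x ⬝ᵥ (vecMulVec v v) *ᵥ x = (x ⬝ᵥ v) * (x ⬝ᵥ v) := by
        rw [dot_vmv]; rw [dotProduct_comm v x]
      simp [Matrix.smul_mulVec, hd]
    rw [this]
    exact mul_nonneg ht (mul_self_nonneg _)

lemma quad_le_trace {N : Matrix m m ℝ} (hN : N.PosSemidef) (x : m → ℝ) :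
    x ⬝ᵥ N *ᵥ x ≤ trace N * (x ⬝ᵥ x) := by
  set d := x ⬝ᵥ x with hd
  have hP : (d • (1 : Matrix m m ℝ) - vecMulVec x x).PosSemidef := by
    refine Matrix.PosSemidef.of_dotProduct_mulVec_nonneg ?_ ?_
    · rw [Matrix.IsHermitian, Matrix.conjTranspose_eq_transpose_of_trivial,
        Matrix.transpose_sub, Matrix.transpose_smul, Matrix.transpose_one, vmv_transpose]
    · intro y
      have expand : (star y) ⬝ᵥ (d • (1 : Matrix m m ℝ) - vecMulVec x x) *ᵥ y
          = d * (y ⬝ᵥ y) - (x ⬝ᵥ y) * (x ⬝ᵥ y) := by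
        have h1 : y ⬝ᵥ (vecMulVec x x) *ᵥ y = (y ⬝ᵥ x) * (x ⬝ᵥ y) := dot_vmv x x y y
        simp [Matrix.sub_mulVec, dotProduct_sub, Matrix.smul_mulVec, h1,
          dotProduct_comm x y]
      rw [expand]
      have hcs := Finset.sum_mul_sq_le_sq_mul_sq (Finset.univ : Finset m) x y
      simp only [dotProduct, hd]
      have e : ∀ z : m → ℝ, ∑ i, z i * z i = ∑ i, z i ^ 2 := fun z =>
        Finset.sum_congr rfl fun i _ => (pow_two (z i)).symm
      rw [e x, e y]
      nlinarith [hcs]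
  have h0 := trace_mul_psd_nonneg hN hP
  have expand : trace (N * (d • (1 : Matrix m m ℝ) - vecMulVec x x))
      = trace N * d - x ⬝ᵥ N *ᵥ x := by
    rw [Matrix.mul_sub, Matrix.trace_sub, Matrix.mul_smul, Matrix.mul_one,
      Matrix.trace_smul, trace_mul_vmv]
    simp [smul_eq_mul, mul_comm]
  rw [expand] at h0
  linarith

lemma dot_sq_le_pd {C : Matrix m m ℝ} (hC : C.PosDef) (x : m → ℝ) :
    (x ⬝ᵥ x) ^ 2 ≤ (x ⬝ᵥ C *ᵥ x) * (x ⬝ᵥ C⁻¹ *ᵥ x) := by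
  have hdet : IsUnit C.det := hC.det_pos.ne'.isUnit
  have hcc : C * C⁻¹ = 1 := Matrix.mul_nonsing_inv _ hdet
  have h := quad_CS hC.posSemidef x (C⁻¹ *ᵥ x)
  have e1 : C *ᵥ (C⁻¹ *ᵥ x) = x := by
    rw [Matrix.mulVec_mulVec, hcc, Matrix.one_mulVec]
  rw [e1] at h
  have e2 : (C⁻¹ *ᵥ x) ⬝ᵥ x = x ⬝ᵥ C⁻¹ *ᵥ x := dotProduct_comm _ _
  rw [e2] at h
  exact h

lemma vmv_smul_left (r : ℝ) (u w : m → ℝ) :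
    vecMulVec (r • u) w = r • vecMulVec u w := by
  ext i j; simp [Matrix.vecMulVec_apply, mul_assoc]

lemma dot_self_pos {x : m → ℝ} (hx : x ≠ 0) : 0 < x ⬝ᵥ x := by
  obtain ⟨i, hi⟩ : ∃ i, x i ≠ 0 := by
    by_contra h
    push_neg at h
    exact hx (funext h)
  exact Finset.sum_pos' (fun j _ => mul_self_nonneg _)
    ⟨i, Finset.mem_univ i, mul_self_pos.mpr hi⟩

lemma sherman {B : Matrix m m ℝ} (hB : IsUnit B.det) (t : ℝ) (v : m → ℝ)
    (hden : 1 + t * (v ⬝ᵥ B⁻¹ *ᵥ v) ≠ 0) :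
    (B + t • vecMulVec v v)⁻¹
      = B⁻¹ - (t / (1 + t * (v ⬝ᵥ B⁻¹ *ᵥ v))) • (B⁻¹ * vecMulVec v v * B⁻¹) := by
  have hp : v ⬝ᵥ B⁻¹ *ᵥ v = v ⬝ᵥ B⁻¹ *ᵥ v := rfl
  set p := v ⬝ᵥ B⁻¹ *ᵥ v with hpdef
  set c := t / (1 + t * p) with hc
  apply Matrix.inv_eq_right_inv
  have hBB : B * B⁻¹ = 1 := Matrix.mul_nonsing_inv _ hB
  have hBV : vecMulVec v v * B⁻¹ * vecMulVec v v = p • vecMulVec v v := by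
    rw [Matrix.mul_assoc, mul_vmv B⁻¹ v v, mul_vmv (vecMulVec v v) (B⁻¹ *ᵥ v) v,
      mulVec_vmv, vmv_smul_left]
  have e1 : B * (c • (B⁻¹ * vecMulVec v v * B⁻¹)) = c • (vecMulVec v v * B⁻¹) := by
    rw [Matrix.mul_smul, ← Matrix.mul_assoc, ← Matrix.mul_assoc, hBB, Matrix.one_mul]
  have e2 : (t • vecMulVec v v) * B⁻¹ = t • (vecMulVec v v * B⁻¹) :=
    Matrix.smul_mul t _ B⁻¹
  have e3 : (t • vecMulVec v v) * (c • (B⁻¹ * vecMulVec v v * B⁻¹))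
      = (t * c * p) • (vecMulVec v v * B⁻¹) := by
    rw [Matrix.smul_mul, Matrix.mul_smul, smul_smul]
    have h4 : vecMulVec v v * (B⁻¹ * vecMulVec v v * B⁻¹)
        = p • (vecMulVec v v * B⁻¹) := by
      rw [← Matrix.mul_assoc, ← Matrix.mul_assoc, hBV, Matrix.smul_mul]
    rw [h4, smul_smul, mul_assoc]
  rw [Matrix.add_mul, Matrix.mul_sub, Matrix.mul_sub, hBB, e1, e2, e3]
  have hzero : t - c - t * c * p = 0 := by
    rw [hc]
    field_simp
    ring
  have final : (1 : Matrix m m ℝ) - c • (vecMulVec v v * B⁻¹)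
      + (t • (vecMulVec v v * B⁻¹) - (t * c * p) • (vecMulVec v v * B⁻¹))
      = 1 + (t - c - t * c * p) • (vecMulVec v v * B⁻¹) := by
    rw [sub_smul, sub_smul]
    abel
  rw [final, hzero, zero_smul, add_zero]

lemma trace_mul_pd_pos [Nonempty m] {M N : Matrix m m ℝ} (hM : M.PosDef) (hN : N.PosDef) :
    0 < trace (N * M) := by
  obtain ⟨S, hSh, hSS⟩ : ∃ S : Matrix m m ℝ, S.IsHermitian ∧ S * S = M :=
    psd_sqrt hM.posSemidef
  have hdet : S.det ≠ 0 := by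
    intro h0
    have : M.det = S.det * S.det := by rw [← hSS, Matrix.det_mul]
    rw [h0, mul_zero] at this
    exact hM.det_pos.ne' this
  have hSu : IsUnit S := (Matrix.isUnit_iff_isUnit_det S).mpr hdet.isUnit
  have hinj : Function.Injective S.mulVec := (Matrix.mulVec_injective_iff_isUnit).mpr hSu
  have h1 : trace (N * M) = trace (S * N * S) := by
    rw [← hSS]
    calc trace (N * (S * S)) = trace ((N * S) * S) := by rw [Matrix.mul_assoc]
      _ = trace (S * (N * S)) := Matrix.trace_mul_comm _ _
      _ = trace (S * N * S) := by rw [Matrix.mul_assoc]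
  rw [h1]
  have hpd : (S * N * S).PosDef := by
    refine Matrix.PosDef.of_dotProduct_mulVec_pos ?_ ?_
    · rw [Matrix.IsHermitian, Matrix.conjTranspose_mul, Matrix.conjTranspose_mul,
        hSh.eq, hN.isHermitian.eq, Matrix.mul_assoc]
    · intro x hx
      have hy : S *ᵥ x ≠ 0 := fun h0 => hx (hinj (by simpa using h0))
      have key : (star x) ⬝ᵥ (S * N * S) *ᵥ x = (S *ᵥ x) ⬝ᵥ N *ᵥ (S *ᵥ x) := by
        have e : (S * N * S) *ᵥ x = S *ᵥ (N *ᵥ (S *ᵥ x)) := by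
          rw [← Matrix.mulVec_mulVec, ← Matrix.mulVec_mulVec]
        rw [e]
        have e2 : x ⬝ᵥ S *ᵥ (N *ᵥ (S *ᵥ x)) = (N *ᵥ (S *ᵥ x)) ⬝ᵥ (S *ᵥ x) :=
          dot_mulVec_symm hSh x (N *ᵥ (S *ᵥ x))
        simpa [dotProduct_comm] using e2
      rw [key]
      have := hN.dotProduct_mulVec_pos hy
      simpa using this
  exact trace_pos_of_pd hpd

lemma sub_one_posDef [Nonempty m] {C : Matrix m m ℝ} (hC : C.PosDef)
    (htr1 : trace C⁻¹ < 1) : (C - 1).PosDef := by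
  refine Matrix.PosDef.of_dotProduct_mulVec_pos ?_ ?_
  · exact hC.isHermitian.sub Matrix.isHermitian_one
  · intro x hx
    have hd : 0 < x ⬝ᵥ x := dot_self_pos hx
    have h1 : (x ⬝ᵥ x) ^ 2 ≤ (x ⬝ᵥ C *ᵥ x) * (x ⬝ᵥ C⁻¹ *ᵥ x) := dot_sq_le_pd hC x
    have h2 : x ⬝ᵥ C⁻¹ *ᵥ x ≤ trace C⁻¹ * (x ⬝ᵥ x) := quad_le_trace hC.inv.posSemidef x
    have h3 : 0 < x ⬝ᵥ C *ᵥ x := pd_quad hC hx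
    have h4 : 0 ≤ x ⬝ᵥ C⁻¹ *ᵥ x := psd_quad hC.inv.posSemidef x
    have goal' : (star x) ⬝ᵥ (C - 1) *ᵥ x = x ⬝ᵥ C *ᵥ x - x ⬝ᵥ x := by
      simp [Matrix.sub_mulVec, dotProduct_sub, Matrix.one_mulVec]
    rw [goal']
    nlinarith [h1, h2, h3, h4, hd, htr1, mul_pos h3 hd]

lemma analysis [Nonempty m] {C : Matrix m m ℝ} (hC : C.PosDef) (htr1 : trace C⁻¹ < 1) :
    0 < trace (C - 1)⁻¹ - trace C⁻¹ ∧
    1 - trace C⁻¹ + (trace (C - 1)⁻¹ - trace C⁻¹) * (1 / trace C⁻¹ - 1)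
      ≤ trace ((C - 1)⁻¹ * (C - 1)⁻¹) / (trace (C - 1)⁻¹ - trace C⁻¹) - trace (C - 1)⁻¹ := by
  set B := C - 1 with hBdef
  have hB : B.PosDef := sub_one_posDef hC htr1
  have hBu : IsUnit B.det := hB.det_pos.ne'.isUnit
  have hCu : IsUnit C.det := hC.det_pos.ne'.isUnit
  have hBiB : B⁻¹ * B = 1 := Matrix.nonsing_inv_mul _ hBu
  have hCCi : C * C⁻¹ = 1 := Matrix.mul_nonsing_inv _ hCu
  have hD : B⁻¹ * C⁻¹ = B⁻¹ - C⁻¹ := by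
    have hCB : C - B = 1 := sub_sub_cancel C 1
    calc B⁻¹ * C⁻¹ = B⁻¹ * ((C - B) * C⁻¹) := by rw [hCB, Matrix.one_mul]
      _ = B⁻¹ * (C * C⁻¹) - B⁻¹ * (B * C⁻¹) := by
          rw [Matrix.sub_mul, Matrix.mul_sub]
      _ = B⁻¹ - C⁻¹ := by
          rw [hCCi, Matrix.mul_one, ← Matrix.mul_assoc, hBiB, Matrix.one_mul]
  have hΔeq : trace B⁻¹ - trace C⁻¹ = trace (B⁻¹ * C⁻¹) := by
    rw [hD, Matrix.trace_sub]
  have hΔpos : 0 < trace B⁻¹ - trace C⁻¹ := by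
    rw [hΔeq]
    exact trace_mul_pd_pos hC.inv hB.inv
  have hφpos : 0 < trace C⁻¹ := trace_pos_of_pd hC.inv
  refine ⟨hΔpos, ?_⟩
  obtain ⟨S, hSh, hSS⟩ : ∃ S : Matrix m m ℝ, S.IsHermitian ∧ S * S = C⁻¹ :=
    psd_sqrt hC.inv.posSemidef
  have hBsym : B⁻¹ᵀ = B⁻¹ := symm_of_hermitian hB.inv.isHermitian
  have hX : (B⁻¹ * S)ᵀ = S * B⁻¹ := by
    rw [Matrix.transpose_mul, hBsym, symm_of_hermitian hSh]
  have hcs := trace_CS (B⁻¹ * S) S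
  rw [hX] at hcs
  have t1 : trace (S * B⁻¹ * S) = trace (B⁻¹ * C⁻¹) := by
    rw [Matrix.trace_mul_comm, ← Matrix.mul_assoc, hSS, Matrix.trace_mul_comm]
  have t2 : trace (S * B⁻¹ * (B⁻¹ * S)) = trace (B⁻¹ * (B⁻¹ * C⁻¹)) := by
    calc trace (S * B⁻¹ * (B⁻¹ * S)) = trace ((B⁻¹ * S) * (S * B⁻¹)) :=
          Matrix.trace_mul_comm _ _
      _ = trace (B⁻¹ * (S * (S * B⁻¹))) := by rw [Matrix.mul_assoc]
      _ = trace (B⁻¹ * ((S * S) * B⁻¹)) := by rw [Matrix.mul_assoc]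
      _ = trace (B⁻¹ * (C⁻¹ * B⁻¹)) := by rw [hSS]
      _ = trace ((B⁻¹ * C⁻¹) * B⁻¹) := by rw [Matrix.mul_assoc]
      _ = trace (B⁻¹ * (B⁻¹ * C⁻¹)) := Matrix.trace_mul_comm _ _
  have t3 : trace (Sᵀ * S) = trace C⁻¹ := by rw [symm_of_hermitian hSh, hSS]
  rw [t1, t2, t3] at hcs
  set T := trace (B⁻¹ * (B⁻¹ * C⁻¹)) with hT
  have hdec : trace (B⁻¹ * B⁻¹) = trace (B⁻¹ * C⁻¹) + T := by
    have hrec : C⁻¹ + B⁻¹ * C⁻¹ = B⁻¹ := by rw [hD]; abel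
    have : B⁻¹ * B⁻¹ = B⁻¹ * C⁻¹ + B⁻¹ * (B⁻¹ * C⁻¹) := by
      nth_rewrite 2 [← hrec]
      rw [Matrix.mul_add]
    rw [this, Matrix.trace_add]
  set Δ := trace B⁻¹ - trace C⁻¹ with hΔ
  have hΔeq2 : trace (B⁻¹ * C⁻¹) = Δ := hΔeq.symm
  rw [hΔeq2] at hcs hdec
  have hBtr : trace B⁻¹ = trace C⁻¹ + Δ := by rw [hΔ]; ring
  rw [hdec, hBtr]
  have hadd : (Δ + T) / Δ = 1 + T / Δ := by
    rw [add_div, div_self hΔpos.ne']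
  rw [hadd]
  have step1 : Δ ≤ T / Δ * trace C⁻¹ := by
    rw [div_mul_eq_mul_div, le_div_iff₀ hΔpos]
    nlinarith [hcs]
  have step2 : Δ * (1 / trace C⁻¹) ≤ T / Δ := by
    rw [mul_one_div, div_le_iff₀ hφpos]
    exact step1
  nlinarith [step2, hΔpos]

lemma update_step [Nonempty m] {C : Matrix m m ℝ} (hC : C.PosDef) (htr1 : trace C⁻¹ < 1)
    {vv : m → ℝ} {t : ℝ} (ht : 0 < t)
    (hcond : 1 / t = (vv ⬝ᵥ ((C - 1)⁻¹ * (C - 1)⁻¹) *ᵥ vv)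
        / (trace (C - 1)⁻¹ - trace C⁻¹) - vv ⬝ᵥ (C - 1)⁻¹ *ᵥ vv) :
    ((C - 1) + t • vecMulVec vv vv).PosDef ∧
      trace (((C - 1) + t • vecMulVec vv vv)⁻¹) = trace C⁻¹ := by
  have hΔpos : 0 < trace (C - 1)⁻¹ - trace C⁻¹ := (analysis hC htr1).1
  set B := C - 1 with hBdef
  have hB : B.PosDef := sub_one_posDef hC htr1
  have hBu : IsUnit B.det := hB.det_pos.ne'.isUnit
  have hPD : (B + t • vecMulVec vv vv).PosDef :=
    hB.add_posSemidef (smul_vmv_psd ht.le vv)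
  have hp : 0 ≤ vv ⬝ᵥ B⁻¹ *ᵥ vv := psd_quad hB.inv.posSemidef vv
  have hden : (0:ℝ) < 1 + t * (vv ⬝ᵥ B⁻¹ *ᵥ vv) := by nlinarith [mul_nonneg ht.le hp]
  have hsm := sherman hBu t vv hden.ne'
  refine ⟨hPD, ?_⟩
  rw [hsm, Matrix.trace_sub, Matrix.trace_smul]
  have htrq : trace (B⁻¹ * vecMulVec vv vv * B⁻¹) = vv ⬝ᵥ (B⁻¹ * B⁻¹) *ᵥ vv := by
    rw [Matrix.trace_mul_cycle, trace_mul_vmv]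
  rw [htrq, smul_eq_mul]
  set q := vv ⬝ᵥ (B⁻¹ * B⁻¹) *ᵥ vv with hq
  set p := vv ⬝ᵥ B⁻¹ *ᵥ vv with hpd2
  set Δ := trace B⁻¹ - trace C⁻¹ with hΔ
  have key : t / (1 + t * p) * q = Δ := by
    have h1 : 1 / t = q / Δ - p := hcond
    field_simp at h1
    field_simp
    nlinarith [h1]
  rw [key, hΔ]
  ring

lemma smul_one_posDef {c : ℝ} (hc : 0 < c) : (c • (1 : Matrix m m ℝ)).PosDef := by
  refine Matrix.PosDef.of_dotProduct_mulVec_pos ?_ ?_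
  · rw [Matrix.IsHermitian, Matrix.conjTranspose_eq_transpose_of_trivial,
      Matrix.transpose_smul, Matrix.transpose_one]
  · intro x hx
    have : (star x) ⬝ᵥ (c • (1 : Matrix m m ℝ)) *ᵥ x = c * (x ⬝ᵥ x) := by
      simp [Matrix.smul_mulVec, Matrix.one_mulVec]
    rw [this]
    exact mul_pos hc (dot_self_pos hx)

lemma smul_one_inv {c : ℝ} (hc : c ≠ 0) :
    (c • (1 : Matrix m m ℝ))⁻¹ = c⁻¹ • 1 := by
  apply Matrix.inv_eq_right_inv
  rw [Matrix.smul_mul, Matrix.mul_smul, Matrix.one_mul, smul_smul, mul_inv_cancel₀ hc, one_smul]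

lemma sum_update {ι : Type*} [Fintype ι] [DecidableEq ι] {Mty : Type*} [AddCommGroup Mty]
    [Module ℝ Mty] (s : ι → ℝ) (t : ℝ) (i : ι) (F : ι → Mty) :
    ∑ j, (Function.update s i (s i + t)) j • F j = (∑ j, s j • F j) + t • F i := by
  rw [← Finset.add_sum_erase _ (fun j => Function.update s i (s i + t) j • F j)
    (Finset.mem_univ i), ← Finset.add_sum_erase _ (fun j => s j • F j) (Finset.mem_univ i)]
  have h2 : ∑ j ∈ Finset.univ.erase i, Function.update s i (s i + t) j • F j
      = ∑ j ∈ Finset.univ.erase i, s j • F j :=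
    Finset.sum_congr rfl fun j hj => by rw [Function.update_of_ne (Finset.ne_of_mem_erase hj)]
  rw [h2, Function.update_self, add_smul]
  abel

end BSS
/-- Dual Set Spectral-Frobenius Sparsification. -/
theorem stmt12 {k l n : ℕ} (hkn : k < n)
    (v : Fin n → (Fin k → ℝ)) (a : Fin n → (Fin l → ℝ))
    (hdecomp : ∑ i, Matrix.vecMulVec (v i) (v i) = 1)
    (r : ℕ) (hkr : k < r) (hrn : r ≤ n) :
    ∃ s : Fin n → ℝ,
      (∀ i, 0 ≤ s i) ∧
      {i | s i ≠ 0}.ncard ≤ r ∧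
      (∀ x : Fin k → ℝ,
        (1 - Real.sqrt ((k : ℝ) / r)) ^ 2 * euclNorm x ^ 2
          ≤ dotp x ((∑ i, s i • Matrix.vecMulVec (v i) (v i)).mulVec x)) ∧
      Matrix.trace (∑ i, s i • Matrix.vecMulVec (a i) (a i)) ≤ ∑ i, euclNorm (a i) ^ 2 := by
  classical
  rcases Nat.eq_zero_or_pos k with hk0 | hkpos
  · subst hk0
    refine ⟨0, fun i => le_rfl, ?_, ?_, ?_⟩
    · have h : {i : Fin n | (0 : Fin n → ℝ) i ≠ 0} = ∅ := by ext i; simp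
      rw [h, Set.ncard_empty]; exact Nat.zero_le r
    · intro x
      have h1 : euclNorm x = 0 := by simp [euclNorm]
      have h2 : dotp x ((∑ i, (0 : Fin n → ℝ) i • Matrix.vecMulVec (v i) (v i)).mulVec x)
          = 0 := by simp [dotp]
      rw [h1, h2]
      norm_num
    · simp only [Pi.zero_apply, zero_smul, Finset.sum_const_zero, Matrix.trace_zero]
      exact Finset.sum_nonneg fun i _ => sq_nonneg _
  · haveI : Nonempty (Fin k) := ⟨⟨0, hkpos⟩⟩
    have hrposn : 0 < r := by omega
    have hrR : (0:ℝ) < r := by exact_mod_cast hrposn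
    have hkR : (0:ℝ) < k := by exact_mod_cast hkpos
    have hφpos : 0 < Real.sqrt ((k:ℝ)/r) := Real.sqrt_pos.mpr (by positivity)
    have hφlt : Real.sqrt ((k:ℝ)/r) < 1 := by
      have h1 : (k:ℝ)/r < 1 := (div_lt_one hrR).mpr (by exact_mod_cast hkr)
      calc Real.sqrt ((k:ℝ)/r) < Real.sqrt 1 := Real.sqrt_lt_sqrt (by positivity) h1
        _ = 1 := Real.sqrt_one
    set φ := Real.sqrt ((k:ℝ)/r) with hφdef
    set ε := 1 - φ with hεdef
    have hεpos : 0 < ε := by rw [hεdef]; linarith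
    set skr := Real.sqrt ((k:ℝ)*r) with hskr
    have hskrpos : 0 < skr := by rw [hskr]; exact Real.sqrt_pos.mpr (by positivity)
    have hmulid : φ * skr = k := by
      rw [hφdef, hskr, ← Real.sqrt_mul (by positivity)]
      have he : (k:ℝ)/r * ((k:ℝ)*r) = (k:ℝ)^2 := by field_simp
      rw [he, Real.sqrt_sq hkR.le]
    have hskr_r : skr = φ * r := by
      rw [hφdef, hskr]
      have h1 : (k:ℝ)*r = ((k:ℝ)/r) * (r:ℝ)^2 := by field_simp
      rw [h1, Real.sqrt_mul (by positivity), Real.sqrt_sq hrR.le]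
    set na := fun i => ∑ j, (a i j)^2 with hna
    have hnann : ∀ i, 0 ≤ na i := fun i => Finset.sum_nonneg fun j _ => sq_nonneg _
    have hSnann : 0 ≤ ∑ i, na i := Finset.sum_nonneg fun i _ => hnann i
    set δU := (∑ i, na i) / ε with hδU
    have hδUnn : 0 ≤ δU := div_nonneg hSnann hεpos.le
    have main : ∀ τ : ℕ, ∃ s : Fin n → ℝ, (∀ i, 0 ≤ s i) ∧ {i | s i ≠ 0}.ncard ≤ τ ∧
        ((∑ i, s i • Matrix.vecMulVec (v i) (v i)) - (((τ:ℝ)) - skr) • 1).PosDef ∧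
        Matrix.trace (((∑ i, s i • Matrix.vecMulVec (v i) (v i)) - (((τ:ℝ)) - skr) • 1)⁻¹) ≤ φ ∧
        ∑ i, s i * na i ≤ τ * δU := by
      intro τ
      induction τ with
      | zero =>
        refine ⟨0, fun i => le_rfl, ?_, ?_, ?_, ?_⟩
        · have h : {i : Fin n | (0 : Fin n → ℝ) i ≠ 0} = ∅ := by ext i; simp
          rw [h, Set.ncard_empty]
        · have hA0 : (∑ i, (0 : Fin n → ℝ) i • Matrix.vecMulVec (v i) (v i))
              - (((0:ℕ):ℝ) - skr) • 1 = skr • (1 : Matrix (Fin k) (Fin k) ℝ) := by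
            simp
          rw [hA0]
          exact BSS.smul_one_posDef hskrpos
        · have hA0 : (∑ i, (0 : Fin n → ℝ) i • Matrix.vecMulVec (v i) (v i))
              - (((0:ℕ):ℝ) - skr) • 1 = skr • (1 : Matrix (Fin k) (Fin k) ℝ) := by
            simp
          rw [hA0, BSS.smul_one_inv hskrpos.ne', Matrix.trace_smul, Matrix.trace_one]
          have he : (skr⁻¹ : ℝ) • (Fintype.card (Fin k) : ℝ) = φ := by
            rw [smul_eq_mul, Fintype.card_fin, inv_mul_eq_div]
            exact (div_eq_iff hskrpos.ne').mpr hmulid.symm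
          rw [he]
        · simp
      | succ τ ih =>
        obtain ⟨s, hs0, hscard, hCpd, hCtr, hbud⟩ := ih
        set C := (∑ i, s i • Matrix.vecMulVec (v i) (v i)) - ((τ:ℝ) - skr) • 1 with hCdef
        have htr1 : Matrix.trace C⁻¹ < 1 := lt_of_le_of_lt hCtr hφlt
        obtain ⟨hΔpos, hineq⟩ := BSS.analysis hCpd htr1
        set Δ := Matrix.trace (C - 1)⁻¹ - Matrix.trace C⁻¹ with hΔdef
        set q := fun i => v i ⬝ᵥ ((C-1)⁻¹ * (C-1)⁻¹) *ᵥ v i with hq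
        set p := fun i => v i ⬝ᵥ (C-1)⁻¹ *ᵥ v i with hp
        have hsum_q : ∑ i, q i = Matrix.trace ((C-1)⁻¹ * (C-1)⁻¹) := by
          simp only [hq]
          calc ∑ i, v i ⬝ᵥ ((C-1)⁻¹ * (C-1)⁻¹) *ᵥ v i
              = ∑ i, Matrix.trace (((C-1)⁻¹ * (C-1)⁻¹) * Matrix.vecMulVec (v i) (v i)) :=
                Finset.sum_congr rfl fun i _ => (BSS.trace_mul_vmv _ _ _).symm
            _ = Matrix.trace (((C-1)⁻¹ * (C-1)⁻¹) * ∑ i, Matrix.vecMulVec (v i) (v i)) := by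
                rw [Matrix.mul_sum, Matrix.trace_sum]
            _ = _ := by rw [hdecomp, Matrix.mul_one]
        have hsum_p : ∑ i, p i = Matrix.trace (C-1)⁻¹ := by
          simp only [hp]
          calc ∑ i, v i ⬝ᵥ (C-1)⁻¹ *ᵥ v i
              = ∑ i, Matrix.trace ((C-1)⁻¹ * Matrix.vecMulVec (v i) (v i)) :=
                Finset.sum_congr rfl fun i _ => (BSS.trace_mul_vmv _ _ _).symm
            _ = Matrix.trace ((C-1)⁻¹ * ∑ i, Matrix.vecMulVec (v i) (v i)) := by
                rw [Matrix.mul_sum, Matrix.trace_sum]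
            _ = _ := by rw [hdecomp, Matrix.mul_one]
        have hφ'pos : 0 < Matrix.trace C⁻¹ := BSS.trace_pos_of_pd hCpd.inv
        have hsumL : ε < ∑ i, (q i / Δ - p i) := by
          have e1 : ∑ i, (q i / Δ - p i) = (∑ i, q i)/Δ - ∑ i, p i := by
            rw [Finset.sum_sub_distrib, Finset.sum_div]
          rw [e1, hsum_q, hsum_p]
          have h3 : 1/φ ≤ 1 / Matrix.trace C⁻¹ := one_div_le_one_div_of_le hφ'pos hCtr
          have h4 : 1 < 1/φ := one_lt_one_div hφpos hφlt
          have h5 : 0 < Δ * (1/φ - 1) := mul_pos hΔpos (by linarith)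
          have h6 : Δ * (1/φ - 1) ≤ Δ * (1 / Matrix.trace C⁻¹ - 1) := by
            apply mul_le_mul_of_nonneg_left _ hΔpos.le
            linarith
          nlinarith [hineq, hCtr, hεdef]
        have hUnn : ∀ i2, 0 ≤ na i2 / δU := fun i2 => div_nonneg (hnann i2) hδUnn
        have hUsum : ∑ i2, na i2 / δU ≤ ε := by
          by_cases hz : (∑ i2, na i2) = 0
          · have hall : ∀ i2 ∈ Finset.univ, na i2 = (0:ℝ) :=
              fun i2 _ => le_antisymm
                (hz ▸ Finset.single_le_sum (fun j _ => hnann j) (Finset.mem_univ i2)) (hnann i2)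
            have hzz : ∑ i2, na i2 / δU = 0 :=
              Finset.sum_eq_zero fun i2 h => by rw [hall i2 h, zero_div]
            rw [hzz]; exact hεpos.le
          · have heq : ∑ i2, na i2 / δU = (∑ i2, na i2) / δU := (Finset.sum_div _ _ _).symm
            rw [heq, hδU, div_div_eq_mul_div, mul_comm, mul_div_assoc, div_self hz, mul_one]
        obtain ⟨i, hi⟩ : ∃ i, na i / δU < q i / Δ - p i := by
          by_contra hcon
          push_neg at hcon
          have hle := Finset.sum_le_sum (fun i2 (_ : i2 ∈ Finset.univ) => hcon i2)
          linarith [hUsum, hsumL]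
        have hLvpos : 0 < q i / Δ - p i := lt_of_le_of_lt (hUnn i) hi
        set t := 1 / (q i / Δ - p i) with ht
        have htpos : 0 < t := one_div_pos.mpr hLvpos
        have hcondeq : 1 / t = q i / Δ - p i := by rw [ht, one_div_one_div]
        obtain ⟨hPD', htr'⟩ := BSS.update_step hCpd htr1 htpos hcondeq
        have hAup : ∑ j, Function.update s i (s i + t) j • Matrix.vecMulVec (v j) (v j)
            = (∑ j, s j • Matrix.vecMulVec (v j) (v j))
              + t • Matrix.vecMulVec (v i) (v i) :=
          BSS.sum_update s t i _
        have hsmul1 : (((τ:ℝ) + 1) - skr) • (1 : Matrix (Fin k) (Fin k) ℝ)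
            = ((τ:ℝ) - skr) • 1 + 1 := by
          have h7 := add_smul ((τ:ℝ) - skr) 1 (1 : Matrix (Fin k) (Fin k) ℝ)
          rw [one_smul] at h7
          rw [← h7]
          ring_nf
        have hCe : (∑ j, Function.update s i (s i+t) j • Matrix.vecMulVec (v j) (v j))
            - (((τ+1:ℕ):ℝ) - skr) • 1 = (C - 1) + t • Matrix.vecMulVec (v i) (v i) := by
          rw [hAup, hCdef]
          push_cast
          rw [hsmul1]
          abel
        refine ⟨Function.update s i (s i + t), ?_, ?_, ?_, ?_, ?_⟩
        · intro j; by_cases hj : j = i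
          · subst hj; rw [Function.update_self]; exact add_nonneg (hs0 j) htpos.le
          · rw [Function.update_of_ne hj]; exact hs0 j
        · have hsub : {j | Function.update s i (s i + t) j ≠ 0} ⊆ insert i {j | s j ≠ 0} := by
            intro j hj
            by_cases hji : j = i
            · exact hji ▸ Set.mem_insert _ _
            · exact Set.mem_insert_of_mem _
                (by rwa [Set.mem_setOf_eq, Function.update_of_ne hji] at hj)
          calc {j | Function.update s i (s i + t) j ≠ 0}.ncard
              ≤ (insert i {j | s j ≠ 0}).ncard := Set.ncard_le_ncard hsub (Set.toFinite _)
            _ ≤ {j | s j ≠ 0}.ncard + 1 := Set.ncard_insert_le _ _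
            _ ≤ τ + 1 := Nat.add_le_add_right hscard 1
        · rw [hCe]; exact hPD'
        · rw [hCe, htr']; exact hCtr
        · have hsum2 : ∑ j, Function.update s i (s i + t) j * na j
              = (∑ j, s j * na j) + t * na i := by
            have h8 := BSS.sum_update (Mty := ℝ) s t i na
            simpa [smul_eq_mul] using h8
          rw [hsum2]
          have hstep : t * na i ≤ δU := by
            by_cases hz : na i = 0
            · rw [hz, mul_zero]; exact hδUnn
            · have hnapos : 0 < na i := lt_of_le_of_ne (hnann i) (Ne.symm hz)
              have hδUpos : 0 < δU := by
                have hSpos : 0 < ∑ i2, na i2 := lt_of_lt_of_le hnapos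
                  (Finset.single_le_sum (fun j _ => hnann j) (Finset.mem_univ i))
                rw [hδU]; exact div_pos hSpos hεpos
              have hU : 0 < na i / δU := div_pos hnapos hδUpos
              have h1 : t < 1 / (na i / δU) := by
                rw [ht]; exact one_div_lt_one_div_of_lt hU hi
              rw [one_div_div] at h1
              exact ((lt_div_iff₀ hnapos).mp h1).le
          push_cast
          have hfin : ((τ:ℝ) + 1) * δU = (τ:ℝ) * δU + δU := by ring
          linarith [hbud, hstep]
    obtain ⟨s, hs0, hscard, hsPD, hstr, hsbud⟩ := main r
    refine ⟨fun i => (ε/r) * s i, ?_, ?_, ?_, ?_⟩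
    · intro i; exact mul_nonneg (div_nonneg hεpos.le hrR.le) (hs0 i)
    · have hsub : {i | (ε/r) * s i ≠ 0} ⊆ {i | s i ≠ 0} := by
        intro i2 hi2
        simp only [Set.mem_setOf_eq] at *
        intro h0; exact hi2 (by rw [h0, mul_zero])
      exact le_trans (Set.ncard_le_ncard hsub (Set.toFinite _)) hscard
    · intro x
      have h0 : 0 ≤ x ⬝ᵥ ((∑ i, s i • Matrix.vecMulVec (v i) (v i))
          - ((r:ℝ) - skr) • 1) *ᵥ x := BSS.psd_quad hsPD.posSemidef x
      have hexp : x ⬝ᵥ ((∑ i, s i • Matrix.vecMulVec (v i) (v i)) - ((r:ℝ) - skr) • 1) *ᵥ x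
          = x ⬝ᵥ (∑ i, s i • Matrix.vecMulVec (v i) (v i)) *ᵥ x
            - ((r:ℝ) - skr) * (x ⬝ᵥ x) := by
        rw [Matrix.sub_mulVec, dotProduct_sub, Matrix.smul_mulVec,
          Matrix.one_mulVec, dotProduct_smul, smul_eq_mul]
      rw [hexp] at h0
      have hLr : (r:ℝ) - skr = ε * r := by rw [hskr_r, hεdef]; ring
      rw [hLr] at h0
      have hsum : (∑ i2, ((ε/r) * s i2) • Matrix.vecMulVec (v i2) (v i2))
          = (ε/r) • ∑ i2, s i2 • Matrix.vecMulVec (v i2) (v i2) := by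
        rw [Finset.smul_sum]
        exact Finset.sum_congr rfl fun i2 _ => by rw [smul_smul]
      have hgoal : dotp x ((∑ i2, ((ε/r) * s i2) • Matrix.vecMulVec (v i2) (v i2)).mulVec x)
          = (ε/r) * (x ⬝ᵥ (∑ i2, s i2 • Matrix.vecMulVec (v i2) (v i2)) *ᵥ x) := by
        show x ⬝ᵥ _ = _
        rw [hsum, Matrix.smul_mulVec, dotProduct_smul, smul_eq_mul]
      rw [hgoal]
      have hnorm : euclNorm x ^ 2 = x ⬝ᵥ x := by
        rw [euclNorm, Real.sq_sqrt (Finset.sum_nonneg fun j _ => sq_nonneg _)]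
        exact Finset.sum_congr rfl fun j _ => pow_two (x j)
      rw [hnorm]
      have hd : 0 ≤ x ⬝ᵥ x := Finset.sum_nonneg fun j _ => mul_self_nonneg _
      have hge : ε * (r:ℝ) * (x ⬝ᵥ x)
          ≤ x ⬝ᵥ (∑ i2, s i2 • Matrix.vecMulVec (v i2) (v i2)) *ᵥ x := by linarith
      calc ε^2 * (x ⬝ᵥ x) = (ε/r) * (ε * r * (x ⬝ᵥ x)) := by field_simp
        _ ≤ (ε/r) * (x ⬝ᵥ (∑ i2, s i2 • Matrix.vecMulVec (v i2) (v i2)) *ᵥ x) :=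
            mul_le_mul_of_nonneg_left hge (div_nonneg hεpos.le hrR.le)
    · have htr : Matrix.trace (∑ i2, ((ε/r) * s i2) • Matrix.vecMulVec (a i2) (a i2))
          = ∑ i2, ((ε/r) * s i2) * na i2 := by
        rw [Matrix.trace_sum]
        refine Finset.sum_congr rfl fun i2 _ => ?_
        rw [Matrix.trace_smul, BSS.trace_vmv, smul_eq_mul]
        congr 1
        simp [hna, dotProduct, pow_two]
      rw [htr]
      have hRHS : ∑ i2, euclNorm (a i2) ^ 2 = ∑ i2, na i2 := by
        refine Finset.sum_congr rfl fun i2 _ => ?_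
        rw [euclNorm, Real.sq_sqrt (Finset.sum_nonneg fun j _ => sq_nonneg _)]
      rw [hRHS]
      have h1 : ∑ i2, ((ε/r) * s i2) * na i2 = (ε/r) * ∑ i2, s i2 * na i2 := by
        rw [Finset.mul_sum]
        exact Finset.sum_congr rfl fun i2 _ => by ring
      rw [h1]
      have h2 : (ε/r) * ∑ i2, s i2 * na i2 ≤ (ε/r) * ((r:ℝ) * δU) :=
        mul_le_mul_of_nonneg_left hsbud (div_nonneg hεpos.le hrR.le)
      have h3 : (ε/r) * ((r:ℝ) * δU) = ∑ i2, na i2 := by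
        rw [hδU]; field_simp
      linarith
end

section
/- Let k ≥ 1, δ > 0, let M be a real symmetric k×k matrix, v ∈ ℝ^k, and L ∈ ℝ. Define φ(L, M) = trace((M − L·I_k)⁻¹) and LOW(v, δ, M, L) = [vᵀ(M − (L+δ)I_k)⁻²v] / [φ(L+δ, M) − φ(L, M)] − vᵀ(M − (L+δ)I_k)⁻¹v. Suppose M − L·I_k is positive definite (all eigenvalues of M exceed L) and φ(L, M) < 1/δ. If t > 0 satisfies 1/t ≤ LOW(v, δ, M, L), then: (1) M + t·vvᵀ − (L + δ)I_k is positive definite, i.e., the smallest eigenvalue of M + t·vvᵀ exceeds L + δ; and (2) φ(L + δ, M + t·vvᵀ) ≤ φ(L, M). -/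
open Matrix
open scoped MatrixOrder

section Aux

lemma quad_le_trace {k : ℕ} {P : Matrix (Fin k) (Fin k) ℝ} (hP : P.PosSemidef)
    (x : Fin k → ℝ) : x ⬝ᵥ P *ᵥ x ≤ Matrix.trace P * (x ⬝ᵥ x) := by
  obtain ⟨B, rfl⟩ : ∃ B : Matrix (Fin k) (Fin k) ℝ, P = Bᴴ * B :=
    ⟨CFC.sqrt P, by rw [(CFC.sqrt_nonneg P).posSemidef.1.eq, CFC.sqrt_mul_sqrt_self P hP.nonneg]⟩
  have hBt : Bᴴ = Bᵀ := by ext i j; simp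
  have h1 : x ⬝ᵥ (Bᴴ * B) *ᵥ x = (B *ᵥ x) ⬝ᵥ (B *ᵥ x) := by
    rw [← Matrix.mulVec_mulVec, Matrix.dotProduct_mulVec, hBt, Matrix.vecMul_transpose]
  have h2 : Matrix.trace (Bᴴ * B) = ∑ a, ∑ i, B a i ^ 2 := by
    simp [Matrix.trace, Matrix.diag, Matrix.mul_apply, Matrix.conjTranspose_apply, sq]
    rw [Finset.sum_comm]
  rw [h1, h2, Finset.sum_mul]
  have h3 : (B *ᵥ x) ⬝ᵥ (B *ᵥ x) = ∑ a, (∑ i, B a i * x i) ^ 2 := by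
    simp [dotProduct, Matrix.mulVec, sq]
  rw [h3]
  apply Finset.sum_le_sum
  intro a _
  calc (∑ i, B a i * x i)^2 ≤ (∑ i, B a i ^2) * ∑ i, x i^2 :=
        Finset.sum_mul_sq_le_sq_mul_sq Finset.univ (fun i => B a i) x
    _ = (∑ i, B a i ^2) * (x ⬝ᵥ x) := by simp [dotProduct, sq]

lemma posdef_trace_pos {k : ℕ} (hk : 1 ≤ k) {P : Matrix (Fin k) (Fin k) ℝ}
    (hP : P.PosDef) : 0 < Matrix.trace P := by
  have : Nonempty (Fin k) := ⟨⟨0, hk⟩⟩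
  rw [Matrix.trace]
  apply Finset.sum_pos _ Finset.univ_nonempty
  intro i _
  have h := hP.dotProduct_mulVec_pos (x := Pi.single i 1) (by simp [Function.ne_iff])
  simpa [dotProduct, Matrix.mulVec, Pi.single_apply, Matrix.diag] using h

lemma vv_mul_X_mul_vv {k : ℕ} (v : Fin k → ℝ) (X : Matrix (Fin k) (Fin k) ℝ) :
    Matrix.vecMulVec v v * X * Matrix.vecMulVec v v
      = (v ⬝ᵥ X *ᵥ v) • Matrix.vecMulVec v v := by
  ext i j
  simp only [Matrix.mul_apply, Matrix.vecMulVec_apply, Matrix.smul_apply, dotProduct,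
    Matrix.mulVec, smul_eq_mul, Finset.sum_mul, Finset.mul_sum]
  rw [Finset.sum_comm]
  apply Finset.sum_congr rfl; intro a _
  apply Finset.sum_congr rfl; intro b _
  ring

lemma trace_mul_vv {k : ℕ} (v : Fin k → ℝ) (X : Matrix (Fin k) (Fin k) ℝ) :
    Matrix.trace (X * Matrix.vecMulVec v v) = v ⬝ᵥ X *ᵥ v := by
  simp only [Matrix.trace, Matrix.diag, Matrix.mul_apply, Matrix.vecMulVec_apply, dotProduct,
    Matrix.mulVec, Finset.mul_sum]
  apply Finset.sum_congr rfl; intro a _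
  apply Finset.sum_congr rfl; intro b _
  ring

lemma quad_vv {k : ℕ} (v x : Fin k → ℝ) :
    x ⬝ᵥ (Matrix.vecMulVec v v) *ᵥ x = (v ⬝ᵥ x)^2 := by
  simp only [dotProduct, Matrix.mulVec, Matrix.vecMulVec_apply, sq, Finset.sum_mul,
    Finset.mul_sum]
  apply Finset.sum_congr rfl; intro a _
  apply Finset.sum_congr rfl; intro b _
  ring

lemma smul_vv_psd {k : ℕ} (v : Fin k → ℝ) {t : ℝ} (ht : 0 ≤ t) :
    (t • Matrix.vecMulVec v v).PosSemidef := by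
  refine Matrix.PosSemidef.of_dotProduct_mulVec_nonneg ?_ ?_
  · unfold Matrix.IsHermitian
    ext i j
    simp [Matrix.vecMulVec_apply, mul_comm]
  · intro x
    simp only [star_trivial, Matrix.smul_mulVec, dotProduct_smul, smul_eq_mul, quad_vv]
    positivity

-- conjugation of posdef by symmetric invertible real matrix
lemma posdef_conj {k : ℕ} {P C : Matrix (Fin k) (Fin k) ℝ} (hP : P.PosDef)
    (hC : Cᵀ = C) (hCdet : IsUnit C.det) : (C * P * C).PosDef := by
  refine Matrix.PosDef.of_dotProduct_mulVec_pos ?_ ?_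
  · have hPH : Pᴴ = P := hP.1
    show (C * P * C)ᴴ = _
    rw [Matrix.conjTranspose_mul, Matrix.conjTranspose_mul, hPH]
    have hCH : Cᴴ = C := by
      ext i j; simpa using congrFun (congrFun hC i) j
    rw [hCH, Matrix.mul_assoc]
  · intro x hx
    have hzx : C *ᵥ x ≠ 0 := by
      intro h
      apply hx
      have : C⁻¹ *ᵥ (C *ᵥ x) = x := by
        rw [Matrix.mulVec_mulVec, Matrix.nonsing_inv_mul _ hCdet, Matrix.one_mulVec]
      rw [← this, h, Matrix.mulVec_zero]
    have hvc : x ᵥ* C = C *ᵥ x := by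
      conv_lhs => rw [← hC]
      rw [Matrix.vecMul_transpose]
    have key : x ⬝ᵥ (C * P * C) *ᵥ x = (C *ᵥ x) ⬝ᵥ P *ᵥ (C *ᵥ x) := by
      rw [← Matrix.mulVec_mulVec, ← Matrix.mulVec_mulVec, Matrix.dotProduct_mulVec x C, hvc]
    simpa [key] using hP.dotProduct_mulVec_pos hzx

end Aux

lemma dotp_eq {n : ℕ} (x y : Fin n → ℝ) : dotp x y = x ⬝ᵥ y := rfl

/-- rank-one update lemma (Batson–Spielman–Srivastava). Here
`φ(L, M) = trace((M − L·I)⁻¹)` and `LOW` is written out explicitly. -/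
theorem stmt13 {k : ℕ} (hk : 1 ≤ k) (δ : ℝ) (hδ : 0 < δ)
    (M : Matrix (Fin k) (Fin k) ℝ) (hM : M.IsSymm) (v : Fin k → ℝ) (L : ℝ)
    (hpos : (M - L • (1 : Matrix (Fin k) (Fin k) ℝ)).PosDef)
    (hφ : Matrix.trace ((M - L • (1 : Matrix (Fin k) (Fin k) ℝ))⁻¹) < 1 / δ)
    (t : ℝ) (ht : 0 < t)
    (hlow : 1 / t ≤
      dotp v ((((M - (L + δ) • (1 : Matrix (Fin k) (Fin k) ℝ))⁻¹
            * (M - (L + δ) • (1 : Matrix (Fin k) (Fin k) ℝ))⁻¹)).mulVec v)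
        / (Matrix.trace ((M - (L + δ) • (1 : Matrix (Fin k) (Fin k) ℝ))⁻¹)
            - Matrix.trace ((M - L • (1 : Matrix (Fin k) (Fin k) ℝ))⁻¹))
        - dotp v (((M - (L + δ) • (1 : Matrix (Fin k) (Fin k) ℝ))⁻¹).mulVec v)) :
    (M + t • Matrix.vecMulVec v v - (L + δ) • (1 : Matrix (Fin k) (Fin k) ℝ)).PosDef ∧
    Matrix.trace ((M + t • Matrix.vecMulVec v v
          - (L + δ) • (1 : Matrix (Fin k) (Fin k) ℝ))⁻¹)
      ≤ Matrix.trace ((M - L • (1 : Matrix (Fin k) (Fin k) ℝ))⁻¹) := by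
  set B : Matrix (Fin k) (Fin k) ℝ := M - L • 1 with hBdef
  set A : Matrix (Fin k) (Fin k) ℝ := M - (L + δ) • 1 with hAdef
  have hAB : A = B - δ • (1 : Matrix (Fin k) (Fin k) ℝ) := by
    rw [hAdef, hBdef, add_smul]; abel
  have hBdetu : IsUnit B.det := hpos.det_pos.ne'.isUnit
  have hBinv : B⁻¹.PosDef := hpos.inv
  -- A is positive definite
  have hA : A.PosDef := by
    refine Matrix.PosDef.of_dotProduct_mulVec_pos ?_ ?_
    · show Aᴴ = A
      have hMH : Mᴴ = M := by
        ext i j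
        simpa [Matrix.conjTranspose_apply] using congrFun (congrFun hM i) j
      rw [hAdef, Matrix.conjTranspose_sub, hMH, Matrix.conjTranspose_smul]
      simp
    · intro x hx
      set C := CFC.sqrt B with hCdef
      have hCC : C * C = B := CFC.sqrt_mul_sqrt_self B hpos.posSemidef.nonneg
      have hCH : Cᴴ = C := (CFC.sqrt_nonneg B).posSemidef.1
      have hCt : Cᵀ = C := by
        ext i j; simpa using congrFun (congrFun hCH i) j
      have hCdet : IsUnit C.det := by
        have : C.det * C.det = B.det := by rw [← Matrix.det_mul, hCC]
        have hBd := hpos.det_pos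
        have : C.det ≠ 0 := by
          intro h; rw [h, mul_zero] at this; rw [← this] at hBd; exact lt_irrefl _ hBd
        exact this.isUnit
      set z := C *ᵥ x with hzdef
      have hz : z ≠ 0 := by
        intro h
        apply hx
        have : C⁻¹ *ᵥ (C *ᵥ x) = x := by
          rw [Matrix.mulVec_mulVec, Matrix.nonsing_inv_mul _ hCdet, Matrix.one_mulVec]
        rw [← this, ← hzdef, h, Matrix.mulVec_zero]
      have hzz : 0 < z ⬝ᵥ z := by
        have := Matrix.dotProduct_star_self_pos_iff (v := z) |>.mpr hz
        simpa using this
      have hvc : ∀ y : Fin k → ℝ, y ᵥ* C = C *ᵥ y := by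
        intro y; conv_lhs => rw [← hCt]
        rw [Matrix.vecMul_transpose]
      -- xᵀ B x = zᵀ z
      have key1 : x ⬝ᵥ B *ᵥ x = z ⬝ᵥ z := by
        rw [← hCC, ← Matrix.mulVec_mulVec, Matrix.dotProduct_mulVec x C, hvc]
      -- xᵀ x = zᵀ B⁻¹ z
      have key2 : x ⬝ᵥ x = z ⬝ᵥ B⁻¹ *ᵥ z := by
        have hBinvC : B⁻¹ *ᵥ z = C⁻¹ *ᵥ x := by
          rw [hzdef, Matrix.mulVec_mulVec, ← hCC, Matrix.mul_inv_rev,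
            Matrix.mul_assoc, Matrix.nonsing_inv_mul _ hCdet, mul_one]
        rw [hBinvC, Matrix.dotProduct_mulVec z C⁻¹]
        have hCit : C⁻¹ᵀ = C⁻¹ := by rw [Matrix.transpose_nonsing_inv, hCt]
        have : z ᵥ* C⁻¹ = C⁻¹ *ᵥ z := by
          conv_lhs => rw [← hCit]
          rw [Matrix.vecMul_transpose]
        rw [this, hzdef, Matrix.mulVec_mulVec, Matrix.nonsing_inv_mul _ hCdet,
          Matrix.one_mulVec]
      have hq := quad_le_trace hBinv.posSemidef z
      have hδx : δ * (x ⬝ᵥ x) < z ⬝ᵥ z := by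
        have h1 : z ⬝ᵥ B⁻¹ *ᵥ z < (1/δ) * (z ⬝ᵥ z) := by
          calc z ⬝ᵥ B⁻¹ *ᵥ z ≤ Matrix.trace B⁻¹ * (z ⬝ᵥ z) := hq
            _ < (1/δ) * (z ⬝ᵥ z) := by
                apply mul_lt_mul_of_pos_right hφ hzz
        rw [key2]
        calc δ * (z ⬝ᵥ B⁻¹ *ᵥ z) < δ * ((1/δ) * (z ⬝ᵥ z)) := by
              apply mul_lt_mul_of_pos_left h1 hδ
          _ = z ⬝ᵥ z := by field_simp
      have expand : x ⬝ᵥ A *ᵥ x = x ⬝ᵥ B *ᵥ x - δ * (x ⬝ᵥ x) := by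
        rw [hAB, Matrix.sub_mulVec, dotProduct_sub, Matrix.smul_mulVec,
          Matrix.one_mulVec, dotProduct_smul, smul_eq_mul]
      simp only [star_trivial]
      rw [expand, key1]
      linarith
  have hAdetu : IsUnit A.det := hA.det_pos.ne'.isUnit
  have hAinv : A⁻¹.PosDef := hA.inv
  -- trace A⁻¹ > trace B⁻¹
  have hdiff : A⁻¹ - B⁻¹ = δ • (A⁻¹ * B⁻¹) := by
    have hBA : B - A = δ • (1 : Matrix (Fin k) (Fin k) ℝ) := by rw [hAB]; abel
    have step : δ • (A⁻¹ * B⁻¹) = A⁻¹ - B⁻¹ := by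
      calc δ • (A⁻¹ * B⁻¹) = A⁻¹ * (δ • (1 : Matrix (Fin k) (Fin k) ℝ)) * B⁻¹ := by
            rw [Matrix.mul_smul, mul_one, Matrix.smul_mul]
        _ = A⁻¹ * (B - A) * B⁻¹ := by rw [hBA]
        _ = A⁻¹ * B * B⁻¹ - A⁻¹ * A * B⁻¹ := by
            rw [Matrix.mul_sub A⁻¹ B A, Matrix.sub_mul (A⁻¹ * B) (A⁻¹ * A) B⁻¹]
        _ = A⁻¹ - B⁻¹ := by
            rw [Matrix.mul_assoc, Matrix.mul_nonsing_inv _ hBdetu, mul_one,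
              Matrix.nonsing_inv_mul _ hAdetu, one_mul]
    exact step.symm
  have hd : 0 < Matrix.trace A⁻¹ - Matrix.trace B⁻¹ := by
    have h1 : Matrix.trace (A⁻¹ - B⁻¹) = δ * Matrix.trace (A⁻¹ * B⁻¹) := by
      rw [hdiff, Matrix.trace_smul]; simp
    have h2 : 0 < Matrix.trace (A⁻¹ * B⁻¹) := by
      set D := CFC.sqrt A⁻¹ with hDdef
      have hDD : D * D = A⁻¹ := CFC.sqrt_mul_sqrt_self A⁻¹ hAinv.posSemidef.nonneg
      have hDH : Dᴴ = D := (CFC.sqrt_nonneg A⁻¹).posSemidef.1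
      have hDt : Dᵀ = D := by ext i j; simpa using congrFun (congrFun hDH i) j
      have hDdet : IsUnit D.det := by
        have hmul : D.det * D.det = A⁻¹.det := by rw [← Matrix.det_mul, hDD]
        have hAd := hAinv.det_pos
        have : D.det ≠ 0 := by
          intro h; rw [h, mul_zero] at hmul; rw [← hmul] at hAd; exact lt_irrefl _ hAd
        exact this.isUnit
      have hcyc : Matrix.trace (A⁻¹ * B⁻¹) = Matrix.trace (D * B⁻¹ * D) := by
        rw [← hDD, Matrix.trace_mul_cycle, Matrix.trace_mul_cycle B⁻¹ D D]
      rw [hcyc]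
      exact posdef_trace_pos hk (posdef_conj hBinv hDt hDdet)
    rw [← Matrix.trace_sub, h1]
    positivity
  -- Sherman-Morrison
  set W : Matrix (Fin k) (Fin k) ℝ := Matrix.vecMulVec v v with hWdef
  set c : ℝ := v ⬝ᵥ A⁻¹ *ᵥ v with hcdef
  have hc : 0 ≤ c := by simpa using hAinv.posSemidef.dotProduct_mulVec_nonneg v
  have h1tc : 0 < 1 + t * c := by positivity
  set s : ℝ := t / (1 + t * c) with hsdef
  set N : Matrix (Fin k) (Fin k) ℝ := A + t • W with hNdef
  have hNpos : N.PosDef := hA.add_posSemidef (smul_vv_psd v ht.le)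
  have hNg : M + t • Matrix.vecMulVec v v - (L + δ) • (1 : Matrix (Fin k) (Fin k) ℝ) = N := by
    rw [hNdef, hWdef, hAdef]; abel
  have e1 : A * A⁻¹ = 1 := Matrix.mul_nonsing_inv _ hAdetu
  have e2 : W * A⁻¹ * W = c • W := by rw [hWdef, vv_mul_X_mul_vv, ← hcdef]
  have hNR : N * (A⁻¹ - s • (A⁻¹ * (W * A⁻¹))) = 1 := by
    have eA : A * (A⁻¹ * (W * A⁻¹)) = W * A⁻¹ := by
      rw [← Matrix.mul_assoc, e1, one_mul]
    have eW : W * (A⁻¹ * (W * A⁻¹)) = c • (W * A⁻¹) := by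
      calc W * (A⁻¹ * (W * A⁻¹)) = (W * A⁻¹ * W) * A⁻¹ := by
            rw [Matrix.mul_assoc, Matrix.mul_assoc]
        _ = (c • W) * A⁻¹ := by rw [e2]
        _ = c • (W * A⁻¹) := by rw [Matrix.smul_mul]
    have hs0 : t - s - t * s * c = 0 := by
      rw [hsdef]; field_simp; ring
    have step : N * (A⁻¹ - s • (A⁻¹ * (W * A⁻¹)))
        = 1 + (t - s - t * s * c) • (W * A⁻¹) := by
      rw [hNdef, Matrix.add_mul A (t • W) _, Matrix.mul_sub A _ _,
        Matrix.mul_sub (t • W) _ _, Matrix.mul_smul, Matrix.mul_smul,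
        Matrix.smul_mul, Matrix.smul_mul, eW, e1, eA]
      module
    rw [step, hs0]
    simp
  have hNinv : N⁻¹ = A⁻¹ - s • (A⁻¹ * (W * A⁻¹)) := Matrix.inv_eq_right_inv hNR
  set Q : ℝ := v ⬝ᵥ (A⁻¹ * A⁻¹) *ᵥ v with hQdef
  have htrN : Matrix.trace N⁻¹ = Matrix.trace A⁻¹ - s * Q := by
    have htr : Matrix.trace (A⁻¹ * (W * A⁻¹)) = Q := by
      rw [← Matrix.mul_assoc, Matrix.trace_mul_cycle A⁻¹ W A⁻¹, hWdef, trace_mul_vv]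
    rw [hNinv, Matrix.trace_sub, Matrix.trace_smul, htr, smul_eq_mul]
  -- numeric part
  have hlow' : 1 / t ≤ Q / (Matrix.trace A⁻¹ - Matrix.trace B⁻¹) - c := by
    simpa [dotp_eq, ← hQdef, ← hcdef] using hlow
  constructor
  · rw [hNg]; exact hNpos
  · rw [hNg, htrN]
    set d : ℝ := Matrix.trace A⁻¹ - Matrix.trace B⁻¹ with hddef
    have h6 : (1 / t + c) * d ≤ Q := by
      rw [← le_div_iff₀ hd]
      linarith
    have h7 : t * ((1 / t + c) * d) ≤ t * Q := mul_le_mul_of_nonneg_left h6 ht.le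
    have hti : t * (1 / t) = 1 := by field_simp
    have h8 : d + t * c * d ≤ t * Q := by
      rw [show t * ((1 / t + c) * d) = t * (1 / t) * d + t * c * d by ring, hti,
        one_mul] at h7
      exact h7
    have h9 : d ≤ t * Q / (1 + t * c) := by
      rw [le_div_iff₀ h1tc]
      nlinarith [h8]
    have h10 : s * Q = t * Q / (1 + t * c) := by
      rw [hsdef]; ring
    have : d ≤ s * Q := by rw [h10]; exact h9
    rw [hddef] at this
    linarith
end

section
/- Let A be a real n×d matrix and let Z be a real n×k matrix with orthonormal columns (ZᵀZ = I_k). Then X = ZᵀA minimizes ‖A − ZX‖₂ over all k×d matrices X; that is, for every real k×d matrix X, ‖A − ZZᵀA‖₂ ≤ ‖A − ZX‖₂. -/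
open Matrix

/-- The spectral norm of a real matrix: `sup_{x ≠ 0} ‖Mx‖₂ / ‖x‖₂`. -/
noncomputable def specNorm {m n : ℕ} (M : Matrix (Fin m) (Fin n) ℝ) : ℝ :=
  sSup ((fun x : Fin n → ℝ => euclNorm (M.mulVec x) / euclNorm x) '' {x | x ≠ 0})

/-- Pythagoras-style inequality. -/
lemma euclNorm_le_of_orth {n : ℕ} (u w : Fin n → ℝ) (h : ∑ i, u i * w i = 0) :
    euclNorm u ≤ euclNorm (u + w) := by
  unfold euclNorm
  apply Real.sqrt_le_sqrt
  have key : ∑ i, (u i + w i) ^ 2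
      = ∑ i, (u i) ^ 2 + 2 * (∑ i, u i * w i) + ∑ i, (w i) ^ 2 := by
    rw [Finset.mul_sum, ← Finset.sum_add_distrib, ← Finset.sum_add_distrib]
    exact Finset.sum_congr rfl fun i _ => by ring
  have hw : 0 ≤ ∑ i, (w i) ^ 2 := Finset.sum_nonneg fun i _ => sq_nonneg _
  simp only [Pi.add_apply]
  rw [key, h]
  linarith

/-- Frobenius bound. -/
lemma euclNorm_mulVec_le {m n : ℕ} (M : Matrix (Fin m) (Fin n) ℝ) (x : Fin n → ℝ) :
    euclNorm (M.mulVec x) ≤ Real.sqrt (∑ i, ∑ j, (M i j) ^ 2) * euclNorm x := by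
  unfold euclNorm
  rw [← Real.sqrt_mul (Finset.sum_nonneg fun i _ => Finset.sum_nonneg fun j _ => sq_nonneg (M i j))]
  apply Real.sqrt_le_sqrt
  rw [Finset.sum_mul]
  apply Finset.sum_le_sum
  intro i _
  have := Finset.sum_mul_sq_le_sq_mul_sq Finset.univ (fun j => M i j) x
  simpa [Matrix.mulVec, dotProduct] using this

theorem spec_mono {m ni : ℕ} (M N : Matrix (Fin m) (Fin ni) ℝ)
    (h : ∀ x : Fin ni → ℝ, euclNorm (M.mulVec x) ≤ euclNorm (N.mulVec x)) :
    specNorm M ≤ specNorm N := by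
  unfold specNorm
  by_cases hd : ∃ x : Fin ni → ℝ, x ≠ 0
  · obtain ⟨x0, hx0⟩ := hd
    have bddT : BddAbove ((fun x : Fin ni → ℝ => euclNorm (N.mulVec x) / euclNorm x)
        '' {x | x ≠ 0}) := by
      refine ⟨Real.sqrt (∑ i, ∑ j, (N i j) ^ 2), ?_⟩
      rintro a ⟨x, hx, rfl⟩
      rw [div_le_iff₀ (euclNorm_pos hx)]
      exact euclNorm_mulVec_le N x
    have hT0 : 0 ≤ sSup ((fun x : Fin ni → ℝ => euclNorm (N.mulVec x) / euclNorm x)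
        '' {x | x ≠ 0}) := by
      refine le_trans ?_ (le_csSup bddT ⟨x0, hx0, rfl⟩)
      exact div_nonneg (euclNorm_nonneg _) (euclNorm_nonneg _)
    apply Real.sSup_le _ hT0
    rintro a ⟨x, hx, rfl⟩
    refine le_trans ?_ (le_csSup bddT ⟨x, hx, rfl⟩)
    exact div_le_div_of_nonneg_right (h x) (euclNorm_nonneg x)
  · have hempty : {x : Fin ni → ℝ | x ≠ 0} = ∅ := by
      push_neg at hd; ext x; simp [hd x]
    simp [hempty]

/-- `X = ZᵀA` minimizes `‖A − Z X‖₂` over all `k × d` matrices `X`. -/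
theorem stmt16 {n d k : ℕ} (A : Matrix (Fin n) (Fin d) ℝ) (Z : Matrix (Fin n) (Fin k) ℝ)
    (hZ : Zᵀ * Z = 1) (X : Matrix (Fin k) (Fin d) ℝ) :
    specNorm (A - Z * (Zᵀ * A)) ≤ specNorm (A - Z * X) := by
  apply spec_mono
  intro x
  have hdecomp : A - Z * X = (A - Z * (Zᵀ * A)) + Z * ((Zᵀ * A) - X) := by
    rw [Matrix.mul_sub]; abel
  set u : Fin n → ℝ := (A - Z * (Zᵀ * A)).mulVec x with hu
  set w : Fin n → ℝ := (Z * ((Zᵀ * A) - X)).mulVec x with hw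
  have hsum : (A - Z * X).mulVec x = u + w := by
    rw [hdecomp, Matrix.add_mulVec]
  rw [hsum]
  apply euclNorm_le_of_orth
  have hZu : Zᵀ.mulVec u = 0 := by
    rw [hu, Matrix.mulVec_mulVec, Matrix.mul_sub, ← Matrix.mul_assoc, hZ, Matrix.one_mul,
      sub_self, Matrix.zero_mulVec]
  have : ∑ i, u i * w i = u ⬝ᵥ w := rfl
  rw [this, hw, ← Matrix.mulVec_mulVec, Matrix.dotProduct_mulVec, ← Matrix.mulVec_transpose,
    hZu]
  simp [dotProduct]
end

section
/- There exists an absolute constant c > 0 with the following property. Let d ≥ 1, let y₁, …, y_d ≥ 0 be nonnegative real numbers, and let U₁, …, U_d be independent random variables each having the standard exponential distribution. Let X = (Σ_{i=1}^d yᵢ²/Uᵢ²)^{1/2}. Then for every r > 0, the probability that X > r·Σ_{i=1}^d yᵢ is at most c/r. -/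
open MeasureTheory

lemma map_eval_pi {d : ℕ} (μ : Measure ℝ) [IsProbabilityMeasure μ] (i : Fin d) :
    (Measure.pi fun _ : Fin d => μ).map (fun u => u i) = μ := by
  ext s hs
  rw [Measure.map_apply (measurable_pi_apply i) hs]
  have : (fun u : Fin d → ℝ => u i) ⁻¹' s
      = Set.pi Set.univ (Function.update (fun _ : Fin d => (Set.univ : Set ℝ)) i s) := by
    ext u
    simp only [Set.mem_preimage, Set.mem_pi, Set.mem_univ, true_implies, Function.update]
    constructor
    · intro h j
      by_cases hj : j = i
      · subst hj; simp [h]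
      · simp [hj]
    · intro h; have := h i; simpa using this
  rw [this, Measure.pi_pi]
  rw [Finset.prod_eq_single i]
  · simp
  · intro j _ hj; simp [Function.update, hj]
  · simp

lemma expPDF_le_one (u : ℝ) : ProbabilityTheory.exponentialPDF 1 u ≤ 1 := by
  rw [ProbabilityTheory.exponentialPDF_eq]
  calc ENNReal.ofReal (if 0 ≤ u then 1 * Real.exp (-(1*u)) else 0)
      ≤ ENNReal.ofReal 1 := by
        apply ENNReal.ofReal_le_ofReal
        split
        · rw [one_mul]; exact (Real.exp_le_one_iff).mpr (by linarith [‹0 ≤ u›])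
        · norm_num
    _ = 1 := ENNReal.ofReal_one

lemma keyInt (a : ℝ) (ha : 0 ≤ a) :
    ∫⁻ u, ENNReal.ofReal (min 1 (a^2/u^2)) ∂(ProbabilityTheory.expMeasure 1)
      ≤ ENNReal.ofReal (2*a) := by
  rcases eq_or_lt_of_le ha with h0 | hpos
  · simp [← h0]
  have hmeas : Measurable fun u : ℝ => ENNReal.ofReal (min 1 (a^2/u^2)) := by
    apply ENNReal.measurable_ofReal.comp
    exact (measurable_const.min (measurable_const.div ((measurable_id.pow_const 2))))
  have hexp : ProbabilityTheory.expMeasure 1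
      = volume.withDensity (ProbabilityTheory.exponentialPDF 1) := rfl
  have hpm : Measurable (ProbabilityTheory.exponentialPDF 1) :=
    ENNReal.measurable_ofReal.comp (ProbabilityTheory.measurable_exponentialPDFReal 1)
  rw [hexp, lintegral_withDensity_eq_lintegral_mul _ hpm hmeas]
  have hb : ∀ u : ℝ, (ProbabilityTheory.exponentialPDF 1 * fun u => ENNReal.ofReal (min 1 (a^2/u^2))) u
      ≤ (Set.Icc (0:ℝ) a).indicator (fun _ => 1) u
        + (Set.Ioi a).indicator (fun u => ENNReal.ofReal (a^2/u^2)) u := by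
    intro u
    simp only [Pi.mul_apply]
    rcases lt_or_ge u 0 with hu | hu
    · rw [ProbabilityTheory.exponentialPDF_of_neg hu]; simp
    rcases le_or_gt u a with hua | hua
    · calc ProbabilityTheory.exponentialPDF 1 u * ENNReal.ofReal (min 1 (a^2/u^2))
          ≤ 1 * 1 := by
            gcongr
            · exact expPDF_le_one u
            · calc ENNReal.ofReal (min 1 (a^2/u^2)) ≤ ENNReal.ofReal 1 :=
                ENNReal.ofReal_le_ofReal (min_le_left _ _)
              _ = 1 := ENNReal.ofReal_one
        _ = (Set.Icc (0:ℝ) a).indicator (fun _ => 1) u := by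
            rw [Set.indicator_of_mem (Set.mem_Icc.mpr ⟨hu, hua⟩)]; norm_num
        _ ≤ _ := le_self_add
    · calc ProbabilityTheory.exponentialPDF 1 u * ENNReal.ofReal (min 1 (a^2/u^2))
          ≤ 1 * ENNReal.ofReal (a^2/u^2) := by
            exact mul_le_mul' (expPDF_le_one u)
              (ENNReal.ofReal_le_ofReal (min_le_right _ _))
        _ = (Set.Ioi a).indicator (fun u => ENNReal.ofReal (a^2/u^2)) u := by
            rw [Set.indicator_of_mem (Set.mem_Ioi.mpr hua)]; norm_num
        _ ≤ _ := le_add_self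
  calc ∫⁻ u, (ProbabilityTheory.exponentialPDF 1 * fun u => ENNReal.ofReal (min 1 (a^2/u^2))) u
      ≤ ∫⁻ u, ((Set.Icc (0:ℝ) a).indicator (fun _ => 1) u
        + (Set.Ioi a).indicator (fun u => ENNReal.ofReal (a^2/u^2)) u) := lintegral_mono hb
    _ = (∫⁻ u, (Set.Icc (0:ℝ) a).indicator (fun _ => 1) u)
        + ∫⁻ u, (Set.Ioi a).indicator (fun u => ENNReal.ofReal (a^2/u^2)) u := by
        apply lintegral_add_left
        exact (measurable_const.indicator measurableSet_Icc)
    _ ≤ ENNReal.ofReal a + ENNReal.ofReal a := by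
        gcongr
        · rw [lintegral_indicator measurableSet_Icc _, setLIntegral_one]
          simp [Real.volume_Icc]
        · rw [lintegral_indicator measurableSet_Ioi _]
          have hcong : ∀ u ∈ Set.Ioi a, a^2 * u ^ (-2:ℝ) = a^2/u^2 := by
            intro u hu
            have hu0 : (0:ℝ) < u := lt_trans hpos hu
            rw [Real.rpow_neg hu0.le, show ((2:ℝ)) = ((2:ℕ):ℝ) by norm_num,
              Real.rpow_natCast, div_eq_mul_inv]
          have h0 : IntegrableOn (fun u : ℝ => a^2 * u ^ (-2:ℝ)) (Set.Ioi a) :=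
            ((integrableOn_Ioi_rpow_of_lt (a := -2) (by norm_num) hpos)).const_mul (a^2)
          have h1 : IntegrableOn (fun u : ℝ => a^2/u^2) (Set.Ioi a) :=
            h0.congr_fun hcong measurableSet_Ioi
          rw [← ofReal_integral_eq_lintegral_ofReal h1
            (ae_restrict_of_ae (ae_of_all _ fun u => div_nonneg (sq_nonneg a) (sq_nonneg u)))]
          apply ENNReal.ofReal_le_ofReal
          rw [← setIntegral_congr_fun measurableSet_Ioi hcong, MeasureTheory.integral_const_mul,
            integral_Ioi_rpow_of_lt (by norm_num) hpos]
          have ha1 : (-2:ℝ) + 1 = -1 := by norm_num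
          rw [ha1, Real.rpow_neg_one]
          have : a * a * (-a⁻¹ / -1) = a := by field_simp
          linarith [this]
    _ = ENNReal.ofReal (2*a) := by rw [← ENNReal.ofReal_add ha ha]; ring_nf

lemma min_sum_ge {ι : Type*} (s : Finset ι) (z : ι → ℝ) (hz : ∀ i ∈ s, 0 ≤ z i)
    (h : 1 < ∑ i ∈ s, z i) : 1 ≤ ∑ i ∈ s, min 1 (z i) := by
  by_cases hc : ∀ i ∈ s, z i ≤ 1
  · calc (1:ℝ) ≤ ∑ i ∈ s, z i := h.le
      _ = ∑ i ∈ s, min 1 (z i) :=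
        Finset.sum_congr rfl fun i hi => (min_eq_right (hc i hi)).symm
  · push_neg at hc
    obtain ⟨i, hi, hzi⟩ := hc
    calc (1:ℝ) = min 1 (z i) := (min_eq_left hzi.le).symm
      _ ≤ ∑ j ∈ s, min 1 (z j) :=
        Finset.single_le_sum (fun j hj => le_min zero_le_one (hz j hj)) hi

/-- The product measure on `ℝ^d` of `d` i.i.d. standard exponential random variables. -/
noncomputable def expPiMeasure (d : ℕ) : Measure (Fin d → ℝ) :=
  haveI : IsProbabilityMeasure (ProbabilityTheory.expMeasure 1) :=
    ProbabilityTheory.isProbabilityMeasure_expMeasure one_pos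
  Measure.pi fun _ : Fin d => ProbabilityTheory.expMeasure 1

/-- tail bound for `(Σᵢ yᵢ²/Uᵢ²)^{1/2}` with `Uᵢ` i.i.d. standard
exponential random variables. -/
theorem stmt17 :
    ∃ c : ℝ, 0 < c ∧
      ∀ (d : ℕ), 1 ≤ d → ∀ y : Fin d → ℝ, (∀ i, 0 ≤ y i) →
      ∀ r : ℝ, 0 < r →
        expPiMeasure d
            {u | Real.sqrt (∑ i, (y i) ^ 2 / (u i) ^ 2) > r * ∑ i, y i}
          ≤ ENNReal.ofReal (c / r) := by
  haveI : IsProbabilityMeasure (ProbabilityTheory.expMeasure 1) :=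
    ProbabilityTheory.isProbabilityMeasure_expMeasure one_pos
  refine ⟨2, two_pos, ?_⟩
  intro d _hd y hy r hr
  have hS0 : 0 ≤ ∑ i, y i := Finset.sum_nonneg fun i _ => hy i
  rcases eq_or_lt_of_le hS0 with hS | hS
  · -- all y i = 0; the event is empty
    have hyz : ∀ i, y i = 0 := fun i =>
      (Finset.sum_eq_zero_iff_of_nonneg (fun i _ => hy i)).1 hS.symm i (Finset.mem_univ i)
    have hempty : {u : Fin d → ℝ | Real.sqrt (∑ i, (y i)^2/(u i)^2) > r * ∑ i, y i} = ∅ := by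
      ext u
      simp only [Set.mem_setOf_eq, Set.mem_empty_iff_false, iff_false, not_lt, gt_iff_lt]
      have h1 : ∑ i, (y i)^2/(u i)^2 = 0 :=
        Finset.sum_eq_zero fun i _ => by rw [hyz i]; simp
      rw [h1, Real.sqrt_zero, ← hS, mul_zero]
    rw [hempty]
    simp only [measure_empty]
    exact zero_le
  · set t : ℝ := r * ∑ i, y i with ht
    have htpos : 0 < t := mul_pos hr hS
    set a : Fin d → ℝ := fun i => y i / t with hadef
    have han : ∀ i, 0 ≤ a i := fun i => div_nonneg (hy i) htpos.le
    have hmeasSum : Measurable fun u : Fin d → ℝ => ∑ i, (a i)^2/(u i)^2 :=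
      Finset.measurable_sum _ fun i _ =>
        measurable_const.div ((measurable_pi_apply i).pow_const 2)
    set A : Set (Fin d → ℝ) := {u | 1 < ∑ i, (a i)^2/(u i)^2} with hA
    have hsub : {u : Fin d → ℝ | Real.sqrt (∑ i, (y i)^2/(u i)^2) > r * ∑ i, y i} ⊆ A := by
      intro u hu
      simp only [Set.mem_setOf_eq, gt_iff_lt] at hu
      simp only [hA, Set.mem_setOf_eq]
      have h1 : t^2 < ∑ i, (y i)^2/(u i)^2 := (Real.lt_sqrt htpos.le).mp hu
      have h2 : ∑ i, (a i)^2/(u i)^2 = (∑ i, (y i)^2/(u i)^2) / t^2 := by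
        rw [Finset.sum_div]
        refine Finset.sum_congr rfl fun i _ => ?_
        simp only [hadef]
        rw [div_pow, div_div, div_div]
        ring_nf
      rw [h2, lt_div_iff₀ (by positivity), one_mul]
      exact h1
    have hintmeas : ∀ i : Fin d,
        Measurable fun u : Fin d → ℝ => ENNReal.ofReal (min 1 ((a i)^2/(u i)^2)) := fun i =>
      ENNReal.measurable_ofReal.comp (measurable_const.min
        (measurable_const.div ((measurable_pi_apply i).pow_const 2)))
    calc expPiMeasure d {u | Real.sqrt (∑ i, (y i)^2/(u i)^2) > r * ∑ i, y i}
        ≤ expPiMeasure d A := measure_mono hsub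
      _ = ∫⁻ _ in A, 1 ∂expPiMeasure d := (setLIntegral_one A).symm
      _ ≤ ∫⁻ u in A, ∑ i, ENNReal.ofReal (min 1 ((a i)^2/(u i)^2)) ∂expPiMeasure d := by
          refine setLIntegral_mono (Finset.measurable_sum _ fun i _ => hintmeas i) ?_
          intro u hu
          simp only [hA, Set.mem_setOf_eq] at hu
          have hge := min_sum_ge Finset.univ (fun i => (a i)^2/(u i)^2)
            (fun i _ => div_nonneg (sq_nonneg _) (sq_nonneg _)) hu
          calc (1:ENNReal) = ENNReal.ofReal 1 := ENNReal.ofReal_one.symm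
            _ ≤ ENNReal.ofReal (∑ i, min 1 ((a i)^2/(u i)^2)) := ENNReal.ofReal_le_ofReal hge
            _ = ∑ i, ENNReal.ofReal (min 1 ((a i)^2/(u i)^2)) :=
              ENNReal.ofReal_sum_of_nonneg fun i _ =>
                le_min zero_le_one (div_nonneg (sq_nonneg _) (sq_nonneg _))
      _ ≤ ∫⁻ u, ∑ i, ENNReal.ofReal (min 1 ((a i)^2/(u i)^2)) ∂expPiMeasure d :=
          setLIntegral_le_lintegral _ _
      _ = ∑ i, ∫⁻ u, ENNReal.ofReal (min 1 ((a i)^2/(u i)^2)) ∂expPiMeasure d :=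
          lintegral_finset_sum _ fun i _ => hintmeas i
      _ ≤ ∑ i, ENNReal.ofReal (2 * a i) := by
          refine Finset.sum_le_sum fun i _ => ?_
          have hg : Measurable fun x : ℝ => ENNReal.ofReal (min 1 ((a i)^2/x^2)) :=
            ENNReal.measurable_ofReal.comp (measurable_const.min
              (measurable_const.div (measurable_id.pow_const 2)))
          have hmappi : (expPiMeasure d).map (fun u => u i) = ProbabilityTheory.expMeasure 1 :=
            map_eval_pi (ProbabilityTheory.expMeasure 1) i
          have hmap := lintegral_map (μ := expPiMeasure d)
            (f := fun x : ℝ => ENNReal.ofReal (min 1 ((a i)^2/x^2))) hg (measurable_pi_apply i)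
          rw [hmappi] at hmap
          calc ∫⁻ u, ENNReal.ofReal (min 1 ((a i)^2/(u i)^2)) ∂expPiMeasure d
              = ∫⁻ x, ENNReal.ofReal (min 1 ((a i)^2/x^2)) ∂(ProbabilityTheory.expMeasure 1) :=
              hmap.symm
            _ ≤ ENNReal.ofReal (2 * a i) := keyInt (a i) (han i)
      _ = ENNReal.ofReal (∑ i, 2 * a i) :=
          (ENNReal.ofReal_sum_of_nonneg fun i _ => mul_nonneg (by norm_num) (han i)).symm
      _ = ENNReal.ofReal (2 / r) := by
          congr 1
          simp only [hadef, ht]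
          rw [← Finset.mul_sum, ← Finset.sum_div]
          field_simp
end
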